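/- arXiv:1402.1588 — 6 statements merged into one kernel-verified Lean document; each statement's English description precedes it below -/
import Mathlib

section
/- Let 𝒜 be an abelian category with enough projective and injective objects, and set silp 𝒜 = sup{ id_𝒜 P : P projective } and spli 𝒜 = sup{ pd_𝒜 I : I injective }. If an object X of 𝒜 has finite projective dimension, then id_𝒜 X ≤ silp 𝒜; dually, if X has finite injective dimension, then pd_𝒜 X ≤ spli 𝒜. -/
/-!
STATEMENT 3: Let 𝒜 be an abelian category with enough projective and injective objects.
If an object `X` has finite projective dimension, then `id X ≤ silp 𝒜`
(the supremum of injective dimensions of projective objects); dually, if `X` has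
finite injective dimension, then `pd X ≤ spli 𝒜`.

We express `pd X ≤ n` (resp. `id X ≤ n`) by the vanishing of `Ext^i(X,-)` (resp.
`Ext^i(-,X)`) for `i > n`, and `id X ≤ silp 𝒜` by: for every `m : ℕ` which is an upper
bound for the injective dimensions of all projective objects, `id X ≤ m`.
-/

open CategoryTheory

universe w v u

/-- `X` has projective dimension at most `n`: `Ext^i(X, -) = 0` for `i > n`. -/
def pdLE {C : Type u} [Category.{v} C] [Abelian C] [HasExt.{w} C]
    (X : C) (n : ℕ) : Prop :=
  ∀ (i : ℕ), n < i → ∀ (Y : C), Subsingleton (Abelian.Ext X Y i)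

/-- `X` has injective dimension at most `n`: `Ext^i(-, X) = 0` for `i > n`. -/
def idLE {C : Type u} [Category.{v} C] [Abelian C] [HasExt.{w} C]
    (X : C) (n : ℕ) : Prop :=
  ∀ (i : ℕ), n < i → ∀ (Y : C), Subsingleton (Abelian.Ext Y X i)

namespace Stmt3Aux

open CategoryTheory.Abelian CategoryTheory.Limits

variable {C : Type u} [Category.{v} C] [Abelian C] [HasExt.{w} C]

section Proj

variable [EnoughProjectives C]

/-- The short complex `ker (π W) → over W → W`. -/
noncomputable def projSES (W : C) : ShortComplex C :=
  ShortComplex.mk (kernel.ι (Projective.π W)) (Projective.π W) (kernel.condition _)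

set_option linter.unusedSectionVars false in
lemma projSES_shortExact (W : C) : (projSES W).ShortExact := by
  refine ShortComplex.ShortExact.mk' ?_ ?_ ?_
  · exact ShortComplex.exact_of_f_is_kernel _ (kernelIsKernel _)
  · exact equalizer.ι_mono
  · exact inferInstanceAs (Epi (Projective.π _))

/-- Iterated syzygies. -/
noncomputable def syz (X : C) : ℕ → C
  | 0 => X
  | (j + 1) => kernel (Projective.π (syz X j))

/-- Iterated extension class. -/
noncomputable def eP (X : C) : (k : ℕ) → Ext X (syz X k) k
  | 0 => Ext.mk₀ (𝟙 X)
  | (k + 1) => (eP X k).comp (projSES_shortExact (syz X k)).extClass rfl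

lemma stepP {m : ℕ} (hm : ∀ P : C, Projective P → idLE.{w} P m) {W Y : C} {t : ℕ}
    (ht : m < t) (c : Ext Y W t) {d : ℕ} (hd : t + 1 = d)
    (h : c.comp (projSES_shortExact W).extClass hd = 0) : c = 0 := by
  obtain ⟨x₂, hx₂⟩ := Ext.covariant_sequence_exact₃ Y (projSES_shortExact W) c hd h
  have hs : Subsingleton (Ext Y (Projective.over W) t) :=
    hm _ inferInstance t ht Y
  rw [← hx₂, (show x₂ = (0 : Ext Y (projSES W).X₂ t) from hs.elim _ _), Ext.zero_comp]
  rfl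

lemma chainP {m : ℕ} (hm : ∀ P : C, Projective P → idLE.{w} P m) (X : C) :
    ∀ (k : ℕ) (Y : C) (i : ℕ), m < i → ∀ (c : Ext Y X i) {d : ℕ} (hd : i + k = d),
      c.comp (eP X k) hd = 0 → c = 0
  | 0, Y, i, hi, c, d, hd, h => by
      obtain rfl : d = i := by omega
      rw [eP] at h
      exact (Ext.comp_mk₀_id c).symm.trans h
  | (k + 1), Y, i, hi, c, d, hd, h => by
      rw [eP] at h
      have assoc := Ext.comp_assoc c (eP X k) (projSES_shortExact (syz X k)).extClass
        rfl rfl (show i + k + 1 = d by omega)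
      have h2 : (c.comp (eP X k) rfl).comp (projSES_shortExact (syz X k)).extClass
          (show (i + k) + 1 = d by omega) = 0 := assoc.trans h
      exact chainP hm X k Y i hi c rfl
        (stepP hm (by omega : m < i + k) _ _ h2)

end Proj

section Inj

variable [EnoughInjectives C]

/-- The short complex `W → under W → coker (ι W)`. -/
noncomputable def injSES (W : C) : ShortComplex C :=
  ShortComplex.mk (Injective.ι W) (cokernel.π (Injective.ι W)) (cokernel.condition _)

set_option linter.unusedSectionVars false in
lemma injSES_shortExact (W : C) : (injSES W).ShortExact := by
  refine ShortComplex.ShortExact.mk' ?_ ?_ ?_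
  · exact ShortComplex.exact_of_g_is_cokernel _ (cokernelIsCokernel _)
  · exact inferInstanceAs (Mono (Injective.ι _))
  · exact coequalizer.π_epi

/-- Iterated cosyzygies. -/
noncomputable def cosyz (X : C) : ℕ → C
  | 0 => X
  | (j + 1) => cokernel (Injective.ι (cosyz X j))

/-- Iterated extension class. -/
noncomputable def eI (X : C) : (k : ℕ) → Ext (cosyz X k) X k
  | 0 => Ext.mk₀ (𝟙 X)
  | (k + 1) => (injSES_shortExact (cosyz X k)).extClass.comp (eI X k) (by omega)

lemma stepI {m : ℕ} (hm : ∀ I : C, Injective I → pdLE.{w} I m) {W Y : C} {t : ℕ}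
    (ht : m < t) (c : Ext W Y t) {d : ℕ} (hd : 1 + t = d)
    (h : (injSES_shortExact W).extClass.comp c hd = 0) : c = 0 := by
  obtain ⟨x₂, hx₂⟩ := Ext.contravariant_sequence_exact₁ (injSES_shortExact W) Y c hd h
  have hs : Subsingleton (Ext (Injective.under W) Y t) :=
    hm _ inferInstance t ht Y
  rw [← hx₂, (show x₂ = (0 : Ext (injSES W).X₂ Y t) from hs.elim _ _), Ext.comp_zero]
  rfl

lemma chainI {m : ℕ} (hm : ∀ I : C, Injective I → pdLE.{w} I m) (X : C) :
    ∀ (k : ℕ) (Y : C) (i : ℕ), m < i → ∀ (c : Ext X Y i) {d : ℕ} (hd : k + i = d),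
      (eI X k).comp c hd = 0 → c = 0
  | 0, Y, i, hi, c, d, hd, h => by
      obtain rfl : d = i := by omega
      rw [eI] at h
      exact (Ext.mk₀_id_comp c).symm.trans h
  | (k + 1), Y, i, hi, c, d, hd, h => by
      rw [eI] at h
      have assoc := Ext.comp_assoc (injSES_shortExact (cosyz X k)).extClass (eI X k) c
        (show 1 + k = k + 1 by omega) rfl (show 1 + k + i = d by omega)
      have h2 : (injSES_shortExact (cosyz X k)).extClass.comp ((eI X k).comp c rfl)
          (show 1 + (k + i) = d by omega) = 0 := assoc.symm.trans h
      exact chainI hm X k Y i hi c rfl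
        (stepI hm (by omega : m < k + i) _ _ h2)

end Inj

end Stmt3Aux

theorem stmt_3 {C : Type u} [Category.{v} C] [Abelian C]
    [EnoughProjectives C] [EnoughInjectives C] [HasExt.{w} C] (X : C) :
    ((∃ n : ℕ, pdLE.{w} X n) →
      ∀ m : ℕ, (∀ P : C, Projective P → idLE.{w} P m) → idLE.{w} X m) ∧
    ((∃ n : ℕ, idLE.{w} X n) →
      ∀ m : ℕ, (∀ I : C, Injective I → pdLE.{w} I m) → pdLE.{w} X m) := by
  constructor
  · rintro ⟨n, hn⟩ m hm i hi Y
    have key : ∀ c : Abelian.Ext Y X i, c = 0 := by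
      intro c
      apply Stmt3Aux.chainP hm X (n + 1) Y i hi c rfl
      have hs : Subsingleton (Abelian.Ext X (Stmt3Aux.syz X (n + 1)) (n + 1)) :=
        hn (n + 1) (by omega) _
      rw [hs.elim (Stmt3Aux.eP X (n + 1)) 0, Abelian.Ext.comp_zero]
    exact ⟨fun a b => by rw [key a, key b]⟩
  · rintro ⟨n, hn⟩ m hm i hi Y
    have key : ∀ c : Abelian.Ext X Y i, c = 0 := by
      intro c
      apply Stmt3Aux.chainI hm X (n + 1) Y i hi c rfl
      have hs : Subsingleton (Abelian.Ext (Stmt3Aux.cosyz X (n + 1)) X (n + 1)) :=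
        hn (n + 1) (by omega) _
      rw [hs.elim (Stmt3Aux.eI X (n + 1)) 0, Abelian.Ext.zero_comp]
    exact ⟨fun a b => by rw [key a, key b]⟩
end

section
/- Let f : 𝒟 → ℱ be an exact functor between abelian categories with enough projectives and injectives, and let t be a nonnegative integer. Suppose that for all objects D, D' of 𝒟 and all j > t there are isomorphisms Ext^j_𝒟(D,D') ≅ Ext^j_ℱ(f(D), f(D')) induced by f, and that f is essentially surjective. Then for every object D of 𝒟 one has pd_ℱ f(D) ≤ max{pd_𝒟 D, t} and pd_𝒟 D ≤ max{pd_ℱ f(D), t}, and the analogous inequalities hold for injective dimensions. -/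
/-!
STATEMENT 4: Let `f : 𝒟 → ℱ` be an exact functor between abelian categories with enough
projectives and injectives, let `t ≥ 0`, and suppose `f` is an essentially surjective
`t`-homological isomorphism, i.e. for all `D, D'` and all `j > t` there are isomorphisms
`Ext^j_𝒟(D, D') ≅ Ext^j_ℱ(f D, f D')`.  Then for every object `D` of `𝒟` we have
`pd_ℱ (f D) ≤ max (pd_𝒟 D) t`, `pd_𝒟 D ≤ max (pd_ℱ (f D)) t`, and the analogous
inequalities for injective dimensions.

`pd X ≤ n` (resp. `id X ≤ n`) is expressed by vanishing of `Ext^i(X,-)` (resp.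
`Ext^i(-,X)`) for `i > n`, and the inequality `pd_ℱ (f D) ≤ max (pd_𝒟 D) t` by:
for every `m`, if `pd_𝒟 D ≤ m` then `pd_ℱ (f D) ≤ max m t`.
-/

open CategoryTheory

universe w w' v u v' u'

open Abelian in
lemma ext_subsingleton_of_iso_right {C : Type u} [Category.{v} C] [Abelian C] [HasExt.{w} C]
    {A Y Y' : C} (e : Y ≅ Y') (i : ℕ) [Subsingleton (Ext A Y' i)] :
    Subsingleton (Ext A Y i) := by
  constructor
  intro a b
  have h : a.comp (Ext.mk₀ e.hom) (add_zero i) = b.comp (Ext.mk₀ e.hom) (add_zero i) :=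
    Subsingleton.elim _ _
  have := congrArg (fun z => z.comp (Ext.mk₀ e.inv) (add_zero i)) h
  simpa [Ext.comp_assoc_of_third_deg_zero, Ext.mk₀_comp_mk₀] using this

open Abelian in
lemma ext_subsingleton_of_iso_left {C : Type u} [Category.{v} C] [Abelian C] [HasExt.{w} C]
    {A A' Y : C} (e : A ≅ A') (i : ℕ) [Subsingleton (Ext A' Y i)] :
    Subsingleton (Ext A Y i) := by
  constructor
  intro a b
  have h : (Ext.mk₀ e.inv).comp a (zero_add i) = (Ext.mk₀ e.inv).comp b (zero_add i) :=
    Subsingleton.elim _ _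
  have := congrArg (fun z => (Ext.mk₀ e.hom).comp z (zero_add i)) h
  simpa [Ext.mk₀_comp_mk₀_assoc] using this

theorem stmt_4 {D : Type u} [Category.{v} D] [Abelian D]
    [EnoughProjectives D] [EnoughInjectives D] [HasExt.{w} D]
    {F : Type u'} [Category.{v'} F] [Abelian F]
    [EnoughProjectives F] [EnoughInjectives F] [HasExt.{w'} F]
    (f : D ⥤ F) [f.Additive]
    [Limits.PreservesFiniteLimits f] [Limits.PreservesFiniteColimits f]
    [f.EssSurj]
    (t : ℕ)
    (hf : ∀ (X Y : D) (j : ℕ), t < j →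
      Nonempty (Abelian.Ext X Y j ≃+ Abelian.Ext (f.obj X) (f.obj Y) j))
    (X : D) (m : ℕ) :
    (pdLE.{w} X m → pdLE.{w'} (f.obj X) (max m t)) ∧
    (pdLE.{w'} (f.obj X) m → pdLE.{w} X (max m t)) ∧
    (idLE.{w} X m → idLE.{w'} (f.obj X) (max m t)) ∧
    (idLE.{w'} (f.obj X) m → idLE.{w} X (max m t)) := by
  refine ⟨?_, ?_, ?_, ?_⟩
  · intro h i hi Y
    have ht : t < i := lt_of_le_of_lt (le_max_right m t) hi
    have hm : m < i := lt_of_le_of_lt (le_max_left m t) hi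
    obtain ⟨e⟩ := hf X (f.objPreimage Y) i ht
    haveI := h i hm (f.objPreimage Y)
    haveI : Subsingleton (Abelian.Ext (f.obj X) (f.obj (f.objPreimage Y)) i) :=
      e.toEquiv.symm.subsingleton
    exact ext_subsingleton_of_iso_right (f.objObjPreimageIso Y).symm i
  · intro h i hi Y
    have ht : t < i := lt_of_le_of_lt (le_max_right m t) hi
    have hm : m < i := lt_of_le_of_lt (le_max_left m t) hi
    obtain ⟨e⟩ := hf X Y i ht
    haveI := h i hm (f.obj Y)
    exact e.toEquiv.subsingleton
  · intro h i hi Y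
    have ht : t < i := lt_of_le_of_lt (le_max_right m t) hi
    have hm : m < i := lt_of_le_of_lt (le_max_left m t) hi
    obtain ⟨e⟩ := hf (f.objPreimage Y) X i ht
    haveI := h i hm (f.objPreimage Y)
    haveI : Subsingleton (Abelian.Ext (f.obj (f.objPreimage Y)) (f.obj X) i) :=
      e.toEquiv.symm.subsingleton
    exact ext_subsingleton_of_iso_left (f.objObjPreimageIso Y).symm i
  · intro h i hi Y
    have ht : t < i := lt_of_le_of_lt (le_max_right m t) hi
    have hm : m < i := lt_of_le_of_lt (le_max_left m t) hi
    obtain ⟨e⟩ := hf Y X i ht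
    haveI := h i hm (f.obj Y)
    exact e.toEquiv.subsingleton
end

section
/- Let f : 𝒟 → ℱ be an essentially surjective exact functor between abelian categories with enough projectives and injectives which is a t-homological isomorphism for some integer t ≥ 0. Then 𝒟 is a Gorenstein category if and only if ℱ is a Gorenstein category. -/
/-!
STATEMENT 5: Let `f : 𝒟 → ℱ` be an essentially surjective exact functor between abelian
categories with enough projectives and injectives which is a `t`-homological isomorphism
for some `t ≥ 0` (i.e. `f` induces isomorphisms `Ext^j_𝒟(D,D') ≅ Ext^j_ℱ(f D, f D')` for
all `j > t`).  Then `𝒟` is Gorenstein if and only if `ℱ` is Gorenstein.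

An abelian category `𝒜` is Gorenstein if `spli 𝒜 = sup { pd I : I injective }` and
`silp 𝒜 = sup { id P : P projective }` are both finite; finiteness of these suprema is
expressed by the existence of a uniform bound.  `pd X ≤ n` (resp. `id X ≤ n`) is
expressed by vanishing of `Ext^i(X,-)` (resp. `Ext^i(-,X)`) for `i > n`.
-/

open CategoryTheory

universe w w' v u v' u'

/-- A Gorenstein abelian category: `spli` and `silp` are both finite. -/
def IsGorensteinCat (C : Type u) [Category.{v} C] [Abelian C] [HasExt.{w} C] : Prop :=
  (∃ n : ℕ, ∀ I : C, Injective I → pdLE.{w} I n) ∧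
  (∃ n : ℕ, ∀ P : C, Projective P → idLE.{w} P n)


namespace GorAux

open Category Limits HomologicalComplex Abelian

section Complexes

variable {C : Type u} [Category.{v} C] [Abelian C]

/-- A chain map from a single complex concentrated in degree 0 with projective object,
to a complex exact at 0, is null-homotopic. -/
noncomputable def homotopyFromSingle (P : C) [Projective P] (Z : CochainComplex C ℤ)
    (hZ : Z.ExactAt 0)
    (g : (HomologicalComplex.single C (ComplexShape.up ℤ) 0).obj P ⟶ Z) :
    Homotopy g 0 := by
  have hS : (Z.sc 0).Exact := hZ
  haveI : Projective (((HomologicalComplex.single C (ComplexShape.up ℤ) 0).obj P).X 0) :=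
    Projective.of_iso (singleObjXSelf (ComplexShape.up ℤ) 0 P).symm inferInstance
  have hd : g.f 0 ≫ Z.d 0 ((ComplexShape.up ℤ).next 0) = 0 := by
    rw [g.comm 0 ((ComplexShape.up ℤ).next 0), single_obj_d, zero_comp]
  set lift := hS.liftFromProjective (g.f 0) hd with hliftdef
  have hlift : lift ≫ Z.d ((ComplexShape.up ℤ).prev 0) 0 = g.f 0 :=
    hS.liftFromProjective_comp (g.f 0) hd
  set homs : ∀ (i j : ℤ), ((HomologicalComplex.single C (ComplexShape.up ℤ) 0).obj P).X i ⟶ Z.X j :=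
    fun i j =>
      if h : i = 0 ∧ j = (ComplexShape.up ℤ).prev 0 then
        eqToHom (by rw [h.1]) ≫ lift ≫ eqToHom (show Z.X ((ComplexShape.up ℤ).prev 0) = Z.X j by rw [h.2])
      else 0 with homsdef
  have hrel : (ComplexShape.up ℤ).Rel ((ComplexShape.up ℤ).prev 0) 0 := by
    simp [CochainComplex.prev]
  refine { hom := homs, zero := ?_, comm := ?_ }
  · intro i j hij
    rw [homsdef]
    dsimp only
    rw [dif_neg]
    rintro ⟨rfl, rfl⟩
    exact hij hrel
  · intro i
    by_cases hi : i = 0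
    · subst hi
      have h1 : dNext 0 homs = 0 := by
        rw [dNext_eq homs (show (ComplexShape.up ℤ).Rel 0 1 by simp), single_obj_d, zero_comp]
      have h2 : prevD 0 homs = g.f 0 := by
        rw [prevD_eq homs hrel, homsdef]
        dsimp only
        erw [dif_pos ⟨rfl, rfl⟩, eqToHom_refl, eqToHom_refl, id_comp, comp_id, hlift]
      rw [h1, h2]
      simp
    · have h0 : g.f i = 0 :=
        (isZero_single_obj_X (ComplexShape.up ℤ) 0 P i hi).eq_of_src _ _
      have h1 : dNext i homs = 0 := by
        by_cases hrel' : (ComplexShape.up ℤ).Rel i ((ComplexShape.up ℤ).next i)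
        · rw [dNext_eq homs hrel', single_obj_d, zero_comp]
        · exact dNext_eq_zero homs i hrel'
      have h2 : prevD i homs = 0 := by
        by_cases hrel' : (ComplexShape.up ℤ).Rel ((ComplexShape.up ℤ).prev i) i
        · rw [prevD_eq homs hrel', homsdef]
          dsimp only
          rw [dif_neg (fun h => hi h.1), zero_comp]
        · exact prevD_eq_zero homs i hrel'
      rw [h0, h1, h2]
      simp


/-- A chain map to a single complex concentrated in degree `a` with injective object,
from a complex exact at `a`, is null-homotopic. -/
noncomputable def homotopyToSingle (I : C) [Injective I] (a : ℤ) (Z : CochainComplex C ℤ)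
    (hZ : Z.ExactAt a)
    (g : Z ⟶ (HomologicalComplex.single C (ComplexShape.up ℤ) a).obj I) :
    Homotopy g 0 := by
  have hS : (Z.sc a).Exact := hZ
  haveI : Injective (((HomologicalComplex.single C (ComplexShape.up ℤ) a).obj I).X a) :=
    Injective.of_iso (singleObjXSelf (ComplexShape.up ℤ) a I).symm inferInstance
  have hd : Z.d ((ComplexShape.up ℤ).prev a) a ≫ g.f a = 0 := by
    rw [← g.comm ((ComplexShape.up ℤ).prev a) a, single_obj_d, comp_zero]
  set desc := hS.descToInjective (g.f a) hd with hdescdef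
  have hdesc : Z.d a ((ComplexShape.up ℤ).next a) ≫ desc = g.f a :=
    hS.comp_descToInjective (g.f a) hd
  set homs : ∀ (i j : ℤ), Z.X i ⟶ ((HomologicalComplex.single C (ComplexShape.up ℤ) a).obj I).X j :=
    fun i j =>
      if h : i = (ComplexShape.up ℤ).next a ∧ j = a then
        eqToHom (show Z.X i = Z.X ((ComplexShape.up ℤ).next a) by rw [h.1]) ≫ desc ≫
          eqToHom (by rw [h.2])
      else 0 with homsdef
  have hrel : (ComplexShape.up ℤ).Rel a ((ComplexShape.up ℤ).next a) := by
    simp [CochainComplex.next]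
  refine { hom := homs, zero := ?_, comm := ?_ }
  · intro i j hij
    rw [homsdef]
    dsimp only
    rw [dif_neg]
    rintro ⟨rfl, rfl⟩
    exact hij hrel
  · intro i
    by_cases hi : i = a
    · subst hi
      have h1 : dNext i homs = g.f i := by
        rw [dNext_eq homs hrel, homsdef]
        dsimp only
        erw [dif_pos ⟨rfl, rfl⟩, eqToHom_refl, eqToHom_refl, id_comp, comp_id, hdesc]
      have h2 : prevD i homs = 0 := by
        by_cases hrel' : (ComplexShape.up ℤ).Rel ((ComplexShape.up ℤ).prev i) i
        · rw [prevD_eq homs hrel', single_obj_d, comp_zero]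
        · exact prevD_eq_zero homs i hrel'
      rw [h1, h2]
      simp
    · have h0 : g.f i = 0 :=
        (isZero_single_obj_X (ComplexShape.up ℤ) a I i hi).eq_of_tgt _ _
      have h1 : dNext i homs = 0 := by
        by_cases hrel' : (ComplexShape.up ℤ).Rel i ((ComplexShape.up ℤ).next i)
        · rw [dNext_eq homs hrel', homsdef]
          dsimp only
          rw [dif_neg (fun h => hi h.2), comp_zero]
        · exact dNext_eq_zero homs i hrel'
      have h2 : prevD i homs = 0 := by
        by_cases hrel' : (ComplexShape.up ℤ).Rel ((ComplexShape.up ℤ).prev i) i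
        · rw [prevD_eq homs hrel', single_obj_d, comp_zero]
        · exact prevD_eq_zero homs i hrel'
      rw [h0, h1, h2]
      simp


lemma fromSingle_eq_zero (P : C) [Projective P] {Z : HomotopyCategory C (ComplexShape.up ℤ)}
    (hZ : IsZero ((HomotopyCategory.homologyFunctor C (ComplexShape.up ℤ) 0).obj Z))
    (g : (HomotopyCategory.singleFunctor C 0).obj P ⟶ Z) : g = 0 := by
  obtain ⟨W, rfl⟩ : ∃ (W : CochainComplex C ℤ),
      (HomotopyCategory.quotient C (ComplexShape.up ℤ)).obj W = Z := ⟨Z.as, rfl⟩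
  obtain ⟨g', rfl⟩ := (HomotopyCategory.quotient C (ComplexShape.up ℤ)).map_surjective g
  have hW : W.ExactAt 0 := by
    rw [HomologicalComplex.exactAt_iff_isZero_homology]
    exact (hZ.of_iso ((HomotopyCategory.homologyFunctorFactors C (ComplexShape.up ℤ) 0).app
      W).symm)
  have h := HomotopyCategory.eq_of_homotopy _ _ (homotopyFromSingle P W hW g')
  exact h.trans (Functor.map_zero _ _ _)

lemma toSingle_eq_zero (I : C) [Injective I] {a : ℤ} (ha : a ≠ 0)
    {Z : HomotopyCategory C (ComplexShape.up ℤ)}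
    (hZ : IsZero ((HomotopyCategory.homologyFunctor C (ComplexShape.up ℤ) a).obj Z))
    (g : Z ⟶ (HomotopyCategory.singleFunctor C a).obj I) : g = 0 := by
  obtain ⟨W, rfl⟩ : ∃ (W : CochainComplex C ℤ),
      (HomotopyCategory.quotient C (ComplexShape.up ℤ)).obj W = Z := ⟨Z.as, rfl⟩
  obtain ⟨g', rfl⟩ := (HomotopyCategory.quotient C (ComplexShape.up ℤ)).map_surjective g
  have hW : W.ExactAt a := by
    rw [HomologicalComplex.exactAt_iff_isZero_homology]
    exact (hZ.of_iso ((HomotopyCategory.homologyFunctorFactors C (ComplexShape.up ℤ) a).app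
      W).symm)
  have h := HomotopyCategory.eq_of_homotopy _ _ (homotopyToSingle I a W hW g')
  exact h.trans (Functor.map_zero _ _ _)

lemma isZero_homology_singleK (Y : C) (a i : ℤ) (h : i ≠ a) :
    IsZero ((HomotopyCategory.homologyFunctor C (ComplexShape.up ℤ) i).obj
      ((HomotopyCategory.singleFunctor C a).obj Y)) := by
  refine IsZero.of_iso ?_ ((HomotopyCategory.homologyFunctorFactors C (ComplexShape.up ℤ) i).app
    ((CochainComplex.singleFunctor C a).obj Y))
  have := (HomologicalComplex.exactAt_iff_isZero_homology
    ((HomologicalComplex.single C (ComplexShape.up ℤ) a).obj Y) i).1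
    (HomologicalComplex.exactAt_single_obj (ComplexShape.up ℤ) a Y i h)
  exact this

lemma singleHom_eq_zero_proj [HasDerivedCategory.{w'} C] (P : C) [Projective P] (Y : C)
    {a : ℤ} (ha : a ≠ 0)
    (φ : (DerivedCategory.singleFunctor C 0).obj P ⟶ (DerivedCategory.singleFunctor C a).obj Y) :
    φ = 0 := by
  haveI : (HomotopyCategory.quasiIso C (ComplexShape.up ℤ)).HasLeftCalculusOfFractions := by
    rw [HomotopyCategory.quasiIso_eq_subcategoryAcyclic_W]; infer_instance
  obtain ⟨μ, hμ⟩ := Localization.exists_leftFraction DerivedCategory.Qh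
    (HomotopyCategory.quasiIso C (ComplexShape.up ℤ))
    (X := (HomotopyCategory.singleFunctor C 0).obj P)
    (Y := (HomotopyCategory.singleFunctor C a).obj Y) φ
  have hmem := μ.hs
  rw [HomotopyCategory.mem_quasiIso_iff] at hmem
  haveI := hmem 0
  have hZ : IsZero ((HomotopyCategory.homologyFunctor C (ComplexShape.up ℤ) 0).obj μ.Y') :=
    IsZero.of_iso (isZero_homology_singleK Y a 0 (Ne.symm ha))
      (asIso ((HomotopyCategory.homologyFunctor C (ComplexShape.up ℤ) 0).map μ.s)).symm
  have hf : μ.f = 0 := fromSingle_eq_zero P hZ μ.f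
  haveI : IsIso (DerivedCategory.Qh.map μ.s) :=
    Localization.inverts DerivedCategory.Qh
      (HomotopyCategory.quasiIso C (ComplexShape.up ℤ)) μ.s μ.hs
  refine (cancel_mono (DerivedCategory.Qh.map μ.s)).1 ?_
  erw [hμ, μ.map_comp_map_s, hf,
    Functor.map_zero, zero_comp]
  rfl

lemma singleHom_eq_zero_inj [HasDerivedCategory.{w'} C] (I : C) [Injective I] (X : C)
    {a : ℤ} (ha : a ≠ 0)
    (φ : (DerivedCategory.singleFunctor C 0).obj X ⟶ (DerivedCategory.singleFunctor C a).obj I) :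
    φ = 0 := by
  haveI : (HomotopyCategory.quasiIso C (ComplexShape.up ℤ)).HasRightCalculusOfFractions := by
    rw [HomotopyCategory.quasiIso_eq_subcategoryAcyclic_W]; infer_instance
  obtain ⟨μ, hμ⟩ := Localization.exists_rightFraction DerivedCategory.Qh
    (HomotopyCategory.quasiIso C (ComplexShape.up ℤ))
    (X := (HomotopyCategory.singleFunctor C 0).obj X)
    (Y := (HomotopyCategory.singleFunctor C a).obj I) φ
  have hmem := μ.hs
  rw [HomotopyCategory.mem_quasiIso_iff] at hmem
  haveI := hmem a
  have hZ : IsZero ((HomotopyCategory.homologyFunctor C (ComplexShape.up ℤ) a).obj μ.X') :=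
    IsZero.of_iso (isZero_homology_singleK X 0 a ha)
      (asIso ((HomotopyCategory.homologyFunctor C (ComplexShape.up ℤ) a).map μ.s))
  have hf : μ.f = 0 := toSingle_eq_zero I ha hZ μ.f
  haveI : IsIso (DerivedCategory.Qh.map μ.s) :=
    Localization.inverts DerivedCategory.Qh
      (HomotopyCategory.quasiIso C (ComplexShape.up ℤ)) μ.s μ.hs
  refine (cancel_epi (DerivedCategory.Qh.map μ.s)).1 ?_
  erw [hμ, μ.map_s_comp_map, hf,
    Functor.map_zero, comp_zero]
  rfl


end Complexes

section ExtVanishing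

variable {C : Type u} [Category.{v} C] [Abelian C] [HasExt.{w} C]

lemma subsingleton_ext_of_projective (P : C) [Projective P] (Y : C) {n : ℕ} (hn : n ≠ 0) :
    Subsingleton (Abelian.Ext P Y n) := by
  letI := HasDerivedCategory.standard C
  have key : ∀ γ : Abelian.Ext P Y n, γ = 0 := by
    intro γ
    apply Abelian.Ext.ext
    rw [Abelian.Ext.zero_hom]
    have e := ((DerivedCategory.singleFunctors C).shiftIso (n : ℤ) (-(n : ℤ)) 0
      (by omega)).app Y
    have h0 : γ.hom ≫ e.hom = 0 :=
      singleHom_eq_zero_proj P Y (a := -(n : ℤ)) (by omega) (γ.hom ≫ e.hom)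
    have : (γ.hom ≫ e.hom) ≫ e.inv = γ.hom := by
      rw [assoc, e.hom_inv_id]; exact comp_id _
    rw [← this, h0, zero_comp]
  exact ⟨fun a b => by rw [key a, key b]⟩

lemma subsingleton_ext_of_injective (I : C) [Injective I] (X : C) {n : ℕ} (hn : n ≠ 0) :
    Subsingleton (Abelian.Ext X I n) := by
  letI := HasDerivedCategory.standard C
  have key : ∀ γ : Abelian.Ext X I n, γ = 0 := by
    intro γ
    apply Abelian.Ext.ext
    rw [Abelian.Ext.zero_hom]
    have e := ((DerivedCategory.singleFunctors C).shiftIso (n : ℤ) (-(n : ℤ)) 0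
      (by omega)).app I
    have h0 : γ.hom ≫ e.hom = 0 :=
      singleHom_eq_zero_inj I X (a := -(n : ℤ)) (by omega) (γ.hom ≫ e.hom)
    have : (γ.hom ≫ e.hom) ≫ e.inv = γ.hom := by
      rw [assoc, e.hom_inv_id]; exact comp_id _
    rw [← this, h0, zero_comp]
  exact ⟨fun a b => by rw [key a, key b]⟩


/-- The short exact sequence `0 ⟶ X ⟶ I(X) ⟶ Ω⁻X ⟶ 0`. -/
noncomputable abbrev injSES [EnoughInjectives C] (X : C) : ShortComplex C :=
  ShortComplex.mk (Injective.ι X) (cokernel.π (Injective.ι X)) (cokernel.condition _)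

lemma injSES_shortExact [EnoughInjectives C] (X : C) : (injSES X).ShortExact where
  exact := ShortComplex.exact_of_g_is_cokernel _ (cokernelIsCokernel _)
  mono_f := by dsimp [injSES]; infer_instance
  epi_g := by dsimp [injSES]; infer_instance

/-- The short exact sequence `0 ⟶ ΩX ⟶ P(X) ⟶ X ⟶ 0`. -/
noncomputable abbrev projSES [EnoughProjectives C] (X : C) : ShortComplex C :=
  ShortComplex.mk (kernel.ι (Projective.π X)) (Projective.π X) (kernel.condition _)

lemma projSES_shortExact [EnoughProjectives C] (X : C) : (projSES X).ShortExact where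
  exact := ShortComplex.exact_of_f_is_kernel _ (kernelIsKernel _)
  mono_f := by dsimp [projSES]; infer_instance
  epi_g := by dsimp [projSES]; infer_instance

/-- Dimension shifting: if every injective has projective dimension `≤ m`, then any object
of injective dimension `≤ k` has projective dimension `≤ m + k`. -/
lemma pdLE_of_idLE [EnoughInjectives C] {m : ℕ}
    (hInj : ∀ I : C, Injective I → pdLE I m) :
    ∀ (k : ℕ) (X : C), idLE X k → pdLE X (m + k) := by
  intro k
  induction k with
  | zero =>
    intro X hX i hi Y
    set S := injSES X with hSdef
    have hS := injSES_shortExact X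
    obtain ⟨x₂, hx₂⟩ := Abelian.Ext.contravariant_sequence_exact₁ hS X (Ext.mk₀ (𝟙 X)) rfl
      (@Subsingleton.elim _ (hX 1 Nat.one_pos _) _ _)
    have key : ∀ γ : Abelian.Ext X Y i, γ = 0 := by
      intro γ
      have h1 : γ = ((Ext.mk₀ S.f).comp x₂ (zero_add 0)).comp γ (zero_add i) := by
        rw [hx₂, Ext.mk₀_id_comp]
      rw [h1, Ext.comp_assoc _ _ _ (zero_add 0) (zero_add i) (zero_add i),
        @Subsingleton.elim _ (hInj (Injective.under X) inferInstance i (by omega) Y)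
          (x₂.comp γ (zero_add i)) 0, Ext.comp_zero]
    exact ⟨fun a b => by rw [key a, key b]⟩
  | succ k ih =>
    intro X hX
    set S := injSES X with hSdef
    have hS := injSES_shortExact X
    -- the cosyzygy has injective dimension ≤ k
    have hX' : idLE (S.X₃) k := by
      intro i hi Z
      have key : ∀ γ : Abelian.Ext Z S.X₃ i, γ = 0 := by
        intro γ
        obtain ⟨x₂, hx₂⟩ := Abelian.Ext.covariant_sequence_exact₃ (X := Z) hS γ rfl
          (@Subsingleton.elim _ (hX (i + 1) (by omega) Z) _ _)
        rw [← hx₂,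
          @Subsingleton.elim _ (subsingleton_ext_of_injective (Injective.under X) Z
            (by omega)) x₂ 0, Ext.zero_comp]
      exact ⟨fun a b => by rw [key a, key b]⟩
    have hpd' : pdLE (S.X₃) (m + k) := ih _ hX'
    intro i hi Y
    have key : ∀ γ : Abelian.Ext X Y i, γ = 0 := by
      intro γ
      obtain ⟨x₂, hx₂⟩ := Abelian.Ext.contravariant_sequence_exact₁ hS Y γ rfl
        (@Subsingleton.elim _ (hpd' (1 + i) (by omega) Y) _ _)
      rw [← hx₂,
        @Subsingleton.elim _ (hInj (Injective.under X) inferInstance i (by omega) Y) x₂ 0,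
        Ext.comp_zero]
    exact ⟨fun a b => by rw [key a, key b]⟩

/-- Dimension shifting, dual version. -/
lemma idLE_of_pdLE [EnoughProjectives C] {m : ℕ}
    (hProj : ∀ P : C, Projective P → idLE P m) :
    ∀ (k : ℕ) (X : C), pdLE X k → idLE X (m + k) := by
  intro k
  induction k with
  | zero =>
    intro X hX i hi Z
    set S := projSES X with hSdef
    have hS := projSES_shortExact X
    obtain ⟨x₂, hx₂⟩ := Abelian.Ext.covariant_sequence_exact₃ (X := X) hS (Ext.mk₀ (𝟙 X)) rfl
      (@Subsingleton.elim _ (hX 1 Nat.one_pos _) _ _)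
    have key : ∀ γ : Abelian.Ext Z X i, γ = 0 := by
      intro γ
      have h1 : γ = γ.comp (x₂.comp (Ext.mk₀ S.g) (add_zero 0)) (add_zero i) := by
        rw [hx₂, Ext.comp_mk₀_id]
      rw [h1, ← Ext.comp_assoc _ _ _ (add_zero i) (add_zero 0) (add_zero i),
        @Subsingleton.elim _ (hProj (Projective.over X) inferInstance i (by omega) Z)
          (γ.comp x₂ (add_zero i)) 0, Ext.zero_comp]
    exact ⟨fun a b => by rw [key a, key b]⟩
  | succ k ih =>
    intro X hX
    set S := projSES X with hSdef
    have hS := projSES_shortExact X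
    -- the syzygy has projective dimension ≤ k
    have hX' : pdLE (S.X₁) k := by
      intro i hi Z
      have key : ∀ γ : Abelian.Ext S.X₁ Z i, γ = 0 := by
        intro γ
        obtain ⟨x₂, hx₂⟩ := Abelian.Ext.contravariant_sequence_exact₁ hS Z γ rfl
          (@Subsingleton.elim _ (hX (1 + i) (by omega) Z) _ _)
        rw [← hx₂,
          @Subsingleton.elim _ (subsingleton_ext_of_projective (Projective.over X) Z
            (by omega)) x₂ 0, Ext.comp_zero]
      exact ⟨fun a b => by rw [key a, key b]⟩
    have hid' : idLE (S.X₁) (m + k) := ih _ hX'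
    intro i hi Z
    have key : ∀ γ : Abelian.Ext Z X i, γ = 0 := by
      intro γ
      obtain ⟨x₂, hx₂⟩ := Abelian.Ext.covariant_sequence_exact₃ (X := Z) hS γ rfl
        (@Subsingleton.elim _ (hid' (i + 1) (by omega) Z) _ _)
      rw [← hx₂,
        @Subsingleton.elim _ (hProj (Projective.over X) inferInstance i (by omega) Z) x₂ 0,
        Ext.zero_comp]
    exact ⟨fun a b => by rw [key a, key b]⟩


lemma subsingleton_ext_of_iso {X X' Y Y' : C} (e : X ≅ X') (e' : Y ≅ Y') (n : ℕ)
    (h : Subsingleton (Abelian.Ext X' Y' n)) : Subsingleton (Abelian.Ext X Y n) := by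
  set φ : Abelian.Ext X Y n → Abelian.Ext X' Y' n :=
    fun a => (Ext.mk₀ e.inv).comp (a.comp (Ext.mk₀ e'.hom) (add_zero n)) (zero_add n) with hφ
  have recover : ∀ a : Abelian.Ext X Y n,
      (Ext.mk₀ e.hom).comp ((φ a).comp (Ext.mk₀ e'.inv) (add_zero n)) (zero_add n) = a := by
    intro a
    rw [hφ]
    dsimp only
    rw [Ext.comp_assoc_of_third_deg_zero, Ext.comp_assoc_of_third_deg_zero,
      Ext.mk₀_comp_mk₀, e'.hom_inv_id, Ext.comp_mk₀_id, Ext.mk₀_comp_mk₀_assoc,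
      e.hom_inv_id, Ext.mk₀_id_comp]
  refine ⟨fun a b => ?_⟩
  rw [← recover a, ← recover b, @Subsingleton.elim _ h (φ a) (φ b)]


end ExtVanishing

theorem stmt5' {D : Type u} [Category.{v} D] [Abelian D]
    [EnoughProjectives D] [EnoughInjectives D] [HasExt.{w} D]
    {F : Type u'} [Category.{v'} F] [Abelian F]
    [EnoughProjectives F] [EnoughInjectives F] [HasExt.{w'} F]
    (f : D ⥤ F) [f.Additive]
    [Limits.PreservesFiniteLimits f] [Limits.PreservesFiniteColimits f]
    [f.EssSurj]
    (t : ℕ)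
    (hf : ∀ (X Y : D) (j : ℕ), t < j →
      Nonempty (Abelian.Ext X Y j ≃+ Abelian.Ext (f.obj X) (f.obj Y) j)) :
    ((∃ n : ℕ, ∀ I : D, Injective I → pdLE I n) ∧
     (∃ n : ℕ, ∀ P : D, Projective P → idLE P n)) ↔
    ((∃ n : ℕ, ∀ I : F, Injective I → pdLE I n) ∧
     (∃ n : ℕ, ∀ P : F, Projective P → idLE P n)) := by
  constructor
  · rintro ⟨⟨n₁, hn₁⟩, ⟨n₂, hn₂⟩⟩
    constructor
    · refine ⟨n₁ + t, ?_⟩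
      intro J hJ
      haveI := hJ
      set D₀ := f.objPreimage J with hD₀
      have e : f.obj D₀ ≅ J := f.objObjPreimageIso J
      have hid : idLE D₀ t := by
        intro j hj Z
        have h1 : Subsingleton (Abelian.Ext (f.obj Z) J j) :=
          subsingleton_ext_of_injective J (f.obj Z) (by omega)
        have h2 : Subsingleton (Abelian.Ext (f.obj Z) (f.obj D₀) j) :=
          subsingleton_ext_of_iso (Iso.refl _) e j h1
        exact Equiv.subsingleton (hf Z D₀ j hj).some.toEquiv
      have hpd : pdLE D₀ (n₁ + t) := pdLE_of_idLE hn₁ t D₀ hid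
      intro i hi Y
      set Y₀ := f.objPreimage Y with hY₀
      have eY : f.obj Y₀ ≅ Y := f.objObjPreimageIso Y
      have h3 : Subsingleton (Abelian.Ext (f.obj D₀) (f.obj Y₀) i) :=
        haveI := hpd i hi Y₀
        Equiv.subsingleton (hf D₀ Y₀ i (by omega)).some.symm.toEquiv
      exact subsingleton_ext_of_iso e.symm eY.symm i h3
    · refine ⟨n₂ + t, ?_⟩
      intro J hJ
      haveI := hJ
      set D₀ := f.objPreimage J with hD₀
      have e : f.obj D₀ ≅ J := f.objObjPreimageIso J
      have hpdJ : pdLE D₀ t := by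
        intro j hj Z
        have h1 : Subsingleton (Abelian.Ext J (f.obj Z) j) :=
          subsingleton_ext_of_projective J (f.obj Z) (by omega)
        have h2 : Subsingleton (Abelian.Ext (f.obj D₀) (f.obj Z) j) :=
          subsingleton_ext_of_iso e (Iso.refl _) j h1
        exact Equiv.subsingleton (hf D₀ Z j hj).some.toEquiv
      have hid : idLE D₀ (n₂ + t) := idLE_of_pdLE hn₂ t D₀ hpdJ
      intro i hi Y
      set Y₀ := f.objPreimage Y with hY₀
      have eY : f.obj Y₀ ≅ Y := f.objObjPreimageIso Y
      have h3 : Subsingleton (Abelian.Ext (f.obj Y₀) (f.obj D₀) i) :=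
        haveI := hid i hi Y₀
        Equiv.subsingleton (hf Y₀ D₀ i (by omega)).some.symm.toEquiv
      exact subsingleton_ext_of_iso eY.symm e.symm i h3
  · rintro ⟨⟨m₁, hm₁⟩, ⟨m₂, hm₂⟩⟩
    constructor
    · refine ⟨m₁ + t, ?_⟩
      intro I hI
      haveI := hI
      have hid : idLE (f.obj I) t := by
        intro j hj Z
        set Z₀ := f.objPreimage Z with hZ₀
        have eZ : f.obj Z₀ ≅ Z := f.objObjPreimageIso Z
        have h1 : Subsingleton (Abelian.Ext (f.obj Z₀) (f.obj I) j) :=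
          haveI := subsingleton_ext_of_injective I Z₀ (n := j) (by omega)
          Equiv.subsingleton (hf Z₀ I j hj).some.symm.toEquiv
        exact subsingleton_ext_of_iso eZ.symm (Iso.refl _) j h1
      have hpd : pdLE (f.obj I) (m₁ + t) := pdLE_of_idLE hm₁ t (f.obj I) hid
      intro i hi Y
      haveI := hpd i hi (f.obj Y)
      exact Equiv.subsingleton (hf I Y i (by omega)).some.toEquiv
    · refine ⟨m₂ + t, ?_⟩
      intro P hP
      haveI := hP
      have hpd : pdLE (f.obj P) t := by
        intro j hj Z
        set Z₀ := f.objPreimage Z with hZ₀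
        have eZ : f.obj Z₀ ≅ Z := f.objObjPreimageIso Z
        have h1 : Subsingleton (Abelian.Ext (f.obj P) (f.obj Z₀) j) :=
          haveI := subsingleton_ext_of_projective P Z₀ (n := j) (by omega)
          Equiv.subsingleton (hf P Z₀ j hj).some.symm.toEquiv
        exact subsingleton_ext_of_iso (Iso.refl _) eZ.symm j h1
      have hid : idLE (f.obj P) (m₂ + t) := idLE_of_pdLE hm₂ t (f.obj P) hpd
      intro i hi Y
      haveI := hid i hi (f.obj Y)
      exact Equiv.subsingleton (hf Y P i (by omega)).some.toEquiv


end GorAux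

theorem stmt_5 {D : Type u} [Category.{v} D] [Abelian D]
    [EnoughProjectives D] [EnoughInjectives D] [HasExt.{w} D]
    {F : Type u'} [Category.{v'} F] [Abelian F]
    [EnoughProjectives F] [EnoughInjectives F] [HasExt.{w'} F]
    (f : D ⥤ F) [f.Additive]
    [Limits.PreservesFiniteLimits f] [Limits.PreservesFiniteColimits f]
    [f.EssSurj]
    (t : ℕ)
    (hf : ∀ (X Y : D) (j : ℕ), t < j →
      Nonempty (Abelian.Ext X Y j ≃+ Abelian.Ext (f.obj X) (f.obj Y) j)) :
    IsGorensteinCat.{w} D ↔ IsGorensteinCat.{w'} F :=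
  GorAux.stmt5' f t hf
end

section
/- Let R be a ring graded over the nonnegative integers. Then R is noetherian if and only if R satisfies the ascending chain condition on graded (homogeneous) ideals. -/
/-!
STATEMENT 6: Let `R` be a ring graded over the nonnegative integers.  Then `R` is
noetherian (both left and right noetherian) if and only if `R` satisfies the ascending
chain condition on graded left ideals and on graded right ideals.

Right ideals of `R` are left ideals of `Rᵐᵒᵖ`.  A (left or right) ideal `I` is graded
(homogeneous) if it contains all homogeneous components of its elements.  The ascending
chain condition is expressed by stabilization of every monotone sequence.
-/

open DirectSum

universe u

section

variable {R : Type u} [Ring R] (𝒜 : ℕ → AddSubgroup R) [GradedRing 𝒜]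

/-- A left ideal is homogeneous if it contains all homogeneous components of its
elements. -/
def IsHomogLeft (I : Ideal R) : Prop :=
  ∀ (i : ℕ) (x : R), x ∈ I → ((DirectSum.decompose 𝒜 x) i : R) ∈ I

/-- A right ideal (a submodule of `R` over `Rᵐᵒᵖ`) is homogeneous if it contains all
homogeneous components of its elements. -/
def IsHomogRight (I : Submodule Rᵐᵒᵖ R) : Prop :=
  ∀ (i : ℕ) (x : R), x ∈ I → ((DirectSum.decompose 𝒜 x) i : R) ∈ I

end

namespace Stmt6Aux

variable {R : Type u} [Ring R] (𝒜 : ℕ → AddSubgroup R) [GradedRing 𝒜]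

/-- The additive map sending `x` to its degree-`n` homogeneous component, as an element of `R`. -/
noncomputable def dcomp (n : ℕ) : R →+ R where
  toFun x := (DirectSum.decompose 𝒜 x n : R)
  map_zero' := by simp
  map_add' x y := by simp

@[simp] lemma dcomp_apply (n : ℕ) (x : R) :
    dcomp 𝒜 n x = (DirectSum.decompose 𝒜 x n : R) := rfl

lemma degset_finite (x : R) : {i : ℕ | (DirectSum.decompose 𝒜 x i : R) ≠ 0}.Finite := by
  classical
  apply Set.Finite.subset (DFinsupp.support (DirectSum.decompose 𝒜 x)).finite_toSet
  intro i hi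
  simp only [Set.mem_setOf_eq] at hi
  simp only [Finset.coe_sort_coe, Finset.mem_coe, DFinsupp.mem_support_iff]
  intro h
  exact hi (by rw [h]; rfl)

lemma eq_zero_of_comps (x : R) (h : ∀ i, (DirectSum.decompose 𝒜 x i : R) = 0) : x = 0 := by
  classical
  rw [← DirectSum.sum_support_decompose 𝒜 x]
  exact Finset.sum_eq_zero fun i _ => h i

/-- The top degree of `x` (junk value for `x = 0`). -/
noncomputable def maxDeg (x : R) : ℕ := sSup {i : ℕ | (DirectSum.decompose 𝒜 x i : R) ≠ 0}

lemma comp_eq_zero_of_maxDeg_lt {x : R} {i : ℕ} (h : maxDeg 𝒜 x < i) :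
    (DirectSum.decompose 𝒜 x i : R) = 0 := by
  by_contra hc
  exact absurd (le_csSup (degset_finite 𝒜 x).bddAbove hc) (not_le.2 h)

lemma comp_maxDeg_ne_zero {x : R} (hx : x ≠ 0) :
    (DirectSum.decompose 𝒜 x (maxDeg 𝒜 x) : R) ≠ 0 := by
  have hne : {i : ℕ | (DirectSum.decompose 𝒜 x i : R) ≠ 0}.Nonempty := by
    by_contra h
    rw [Set.not_nonempty_iff_eq_empty, Set.eq_empty_iff_forall_notMem] at h
    exact hx (eq_zero_of_comps 𝒜 x fun i => not_not.1 (h i))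
  exact Nat.sSup_mem hne (degset_finite 𝒜 x).bddAbove

/-- The leading homogeneous component of `x`. -/
noncomputable def lead (x : R) : R := (DirectSum.decompose 𝒜 x (maxDeg 𝒜 x) : R)

lemma lead_mem (x : R) : lead 𝒜 x ∈ 𝒜 (maxDeg 𝒜 x) := SetLike.coe_mem _

section Unified

variable {S : Type u} [Ring S] [Module S R]

/-- Homogeneity of an `S`-submodule of `R`. -/
def IsHomogS (I : Submodule S R) : Prop :=
  ∀ (i : ℕ) (x : R), x ∈ I → ((DirectSum.decompose 𝒜 x) i : R) ∈ I

/-- The set of leading components of nonzero elements of `I`. -/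
def leadSet (I : Submodule S R) : Set R := {a | ∃ x, x ∈ I ∧ x ≠ 0 ∧ a = lead 𝒜 x}

/-- The "leading term" submodule of `I`. -/
noncomputable def leadIdeal (I : Submodule S R) : Submodule S R :=
  Submodule.span S (leadSet 𝒜 I)

lemma leadIdeal_mono {I J : Submodule S R} (h : I ≤ J) : leadIdeal 𝒜 I ≤ leadIdeal 𝒜 J :=
  Submodule.span_mono (fun _ ⟨x, hx, hx0, he⟩ => ⟨x, h hx, hx0, he⟩)

variable (D : S → ℕ → S)

/-- Decomposition of a scalar product over the homogeneous components of `x`. -/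
lemma comps_smul (s : S) (x : R) (n : ℕ) :
    ∃ t : Finset ℕ, (∀ j, j ∈ t ↔ (DirectSum.decompose 𝒜 x j : R) ≠ 0) ∧
      (DirectSum.decompose 𝒜 (s • x) n : R) =
        ∑ j ∈ t, (DirectSum.decompose 𝒜 (s • (DirectSum.decompose 𝒜 x j : R)) n : R) := by
  classical
  refine ⟨(DirectSum.decompose 𝒜 x).support, ?_, ?_⟩
  · intro j
    rw [DFinsupp.mem_support_iff]
    constructor
    · intro h hc; exact h (Subtype.ext hc)
    · intro h hc; exact h (by rw [hc]; rfl)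
  · have hx : x = ∑ j ∈ (DirectSum.decompose 𝒜 x).support,
        (DirectSum.decompose 𝒜 x j : R) :=
      (DirectSum.sum_support_decompose 𝒜 x).symm
    conv_lhs => rw [hx]
    rw [Finset.smul_sum]
    exact map_sum (dcomp 𝒜 n) _ _

section Hyp

variable (hle : ∀ (s : S) {i n : ℕ} {x : R}, x ∈ 𝒜 i → i ≤ n →
    (DirectSum.decompose 𝒜 (s • x) n : R) = (D s (n - i)) • x)
variable (hnle : ∀ (s : S) {i n : ℕ} {x : R}, x ∈ 𝒜 i → ¬ i ≤ n →
    (DirectSum.decompose 𝒜 (s • x) n : R) = 0)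
variable (hmem : ∀ (s : S) (k : ℕ) {j : ℕ} {x : R}, x ∈ 𝒜 j → (D s k) • x ∈ 𝒜 (k + j))

include hle hnle in
lemma isHomog_span (s : Set R) (hs : ∀ a ∈ s, ∃ i, a ∈ 𝒜 i) :
    IsHomogS 𝒜 (Submodule.span S s) := by
  intro n x hx
  revert n
  induction hx using Submodule.span_induction with
  | mem a ha =>
    intro n
    obtain ⟨i, hi⟩ := hs a ha
    by_cases h : i = n
    · rw [h] at hi; rw [DirectSum.decompose_of_mem_same 𝒜 hi]
      exact Submodule.subset_span ha
    · rw [DirectSum.decompose_of_mem_ne 𝒜 hi h]; exact zero_mem _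
  | zero => intro n; simp
  | add x y hx hy ihx ihy =>
    intro n
    rw [DirectSum.decompose_add]
    simpa using add_mem (ihx n) (ihy n)
  | smul a x hx ih =>
    intro n
    obtain ⟨t, _, hsum⟩ := comps_smul 𝒜 a x n
    rw [hsum]
    refine Submodule.sum_mem _ (fun j _ => ?_)
    by_cases h : j ≤ n
    · rw [hle a (SetLike.coe_mem _) h]
      exact Submodule.smul_mem _ _ (ih j)
    · rw [hnle a (SetLike.coe_mem _) h]
      exact zero_mem _

include hle hnle hmem in
lemma key {I J : Submodule S R} (hIJ : I ≤ J) (hL : leadIdeal 𝒜 J ≤ leadIdeal 𝒜 I) :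
    J ≤ I := by
  classical
  suffices haux : ∀ n : ℕ, ∀ x, x ∈ J → (∀ i, n ≤ i → (DirectSum.decompose 𝒜 x i : R) = 0) →
      x ∈ I by
    intro x hx
    exact haux (maxDeg 𝒜 x + 1) x hx
      (fun i hi => comp_eq_zero_of_maxDeg_lt 𝒜 (Nat.lt_of_succ_le hi))
  intro n
  induction n with
  | zero =>
    intro x hx hvan
    rw [eq_zero_of_comps 𝒜 x (fun i => hvan i (Nat.zero_le i))]
    exact zero_mem _
  | succ n ih =>
    intro x hxJ hvan
    by_cases hc : (DirectSum.decompose 𝒜 x n : R) = 0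
    · refine ih x hxJ (fun i hi => ?_)
      rcases Nat.eq_or_lt_of_le hi with h | h
      · rw [← h]; exact hc
      · exact hvan i h
    · -- x is nonzero with top degree n
      set c : R := (DirectSum.decompose 𝒜 x n : R) with hcdef
      have hx0 : x ≠ 0 := by
        intro h
        apply hc
        rw [hcdef, h]
        simp
      have hmd : maxDeg 𝒜 x = n := by
        apply le_antisymm
        · apply csSup_le ⟨n, hc⟩
          intro i hi
          by_contra h
          exact hi (hvan i (Nat.succ_le_of_lt (not_le.1 h)))
        · exact le_csSup (degset_finite 𝒜 x).bddAbove hc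
      have hcl : c = lead 𝒜 x := by rw [lead, hmd]
      have hcmem : c ∈ 𝒜 n := by rw [← hmd]; rw [hcdef, hmd]; exact SetLike.coe_mem _
      have hcL : c ∈ leadIdeal 𝒜 I :=
        hL (Submodule.subset_span ⟨x, hxJ, hx0, hcl⟩)
      rw [leadIdeal, Submodule.mem_span_set] at hcL
      obtain ⟨f, hfs, hfsum⟩ := hcL
      -- choose witnesses
      have hch : ∀ a : R, ∃ z : R, a ∈ leadSet 𝒜 I → (z ∈ I ∧ z ≠ 0 ∧ a = lead 𝒜 z) := by
        intro a
        by_cases h : a ∈ leadSet 𝒜 I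
        · obtain ⟨z, hz⟩ := h; exact ⟨z, fun _ => hz⟩
        · exact ⟨0, fun h' => absurd h' h⟩
      choose yy hyy using hch
      set g : R → R := fun a =>
        if maxDeg 𝒜 (yy a) ≤ n then (D (f a) (n - maxDeg 𝒜 (yy a))) • yy a else 0 with hgdef
      set y : R := ∑ a ∈ f.support, g a with hydef
      have hyI : y ∈ I := by
        refine Submodule.sum_mem _ (fun a ha => ?_)
        rw [hgdef]
        dsimp only
        split
        · exact Submodule.smul_mem _ _ ((hyy a (hfs ha)).1)
        · exact zero_mem _
      -- components of each g a
      have hga : ∀ a ∈ f.support, ∀ m, n ≤ m →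
          (DirectSum.decompose 𝒜 (g a) m : R) =
            if m = n then (DirectSum.decompose 𝒜 ((f a) • a) n : R) else 0 := by
        intro a ha m hm
        obtain ⟨hyI', hy0, hal⟩ := hyy a (hfs ha)
        set d : ℕ := maxDeg 𝒜 (yy a) with hddef
        have hamem : a ∈ 𝒜 d := hal ▸ lead_mem 𝒜 (yy a)
        rw [hgdef]
        dsimp only
        by_cases hdn : d ≤ n
        · rw [if_pos hdn]
          obtain ⟨t, ht, hsum⟩ := comps_smul 𝒜 (D (f a) (n - d)) (yy a) m
          rw [hsum]
          have hterm : ∀ j ∈ t,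
              (DirectSum.decompose 𝒜
                ((D (f a) (n - d)) • (DirectSum.decompose 𝒜 (yy a) j : R)) m : R) =
              if (n - d) + j = m then
                (D (f a) (n - d)) • (DirectSum.decompose 𝒜 (yy a) j : R) else 0 := by
            intro j hj
            have hmemj := hmem (f a) (n - d) (SetLike.coe_mem ((DirectSum.decompose 𝒜 (yy a)) j))
            by_cases h : (n - d) + j = m
            · rw [if_pos h, ← h]
              exact DirectSum.decompose_of_mem_same 𝒜 hmemj
            · rw [if_neg h]
              exact DirectSum.decompose_of_mem_ne 𝒜 hmemj h
          have hjle : ∀ j ∈ t, j ≤ d := by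
            intro j hj
            by_contra h
            exact (ht j).1 hj (comp_eq_zero_of_maxDeg_lt 𝒜 (not_le.1 h))
          by_cases hmn : m = n
          · subst hmn
            -- only j = d contributes
            have hdt : d ∈ t := (ht d).2 (comp_maxDeg_ne_zero 𝒜 hy0)
            rw [Finset.sum_congr rfl hterm]
            rw [Finset.sum_eq_single_of_mem d hdt]
            · rw [if_pos (Nat.sub_add_cancel hdn), if_pos rfl]
              rw [hle (f a) hamem hdn]
              congr 1
              exact hal.symm
            · intro j hj hjd
              rw [if_neg]
              intro h
              exact hjd (by omega)
          · rw [if_neg hmn]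
            rw [Finset.sum_congr rfl hterm]
            refine Finset.sum_eq_zero (fun j hj => ?_)
            rw [if_neg]
            have := hjle j hj
            omega
        · rw [if_neg hdn]
          have h1 : (DirectSum.decompose 𝒜 (0 : R) m : R) = 0 := by simp
          rw [h1]
          by_cases hmn : m = n
          · rw [if_pos hmn, hnle (f a) hamem hdn]
          · rw [if_neg hmn]
      -- decompose y at degree n is c, above n is 0
      have hyn : ∀ m, n ≤ m →
          (DirectSum.decompose 𝒜 y m : R) = if m = n then c else 0 := by
        intro m hm
        have h1 : (DirectSum.decompose 𝒜 y m : R) = ∑ a ∈ f.support,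
            (DirectSum.decompose 𝒜 (g a) m : R) := by
          rw [hydef]; exact map_sum (dcomp 𝒜 m) _ _
        rw [h1, Finset.sum_congr rfl (fun a ha => hga a ha m hm)]
        by_cases hmn : m = n
        · rw [Finset.sum_congr rfl (fun a _ => if_pos hmn), if_pos hmn]
          have : ∑ a ∈ f.support, (DirectSum.decompose 𝒜 ((f a) • a) n : R)
              = (DirectSum.decompose 𝒜 (∑ a ∈ f.support, (f a) • a) n : R) :=
            (map_sum (dcomp 𝒜 n) _ _).symm
          rw [this]
          have hfsum' : ∑ a ∈ f.support, (f a) • a = c := hfsum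
          rw [hfsum']
          exact DirectSum.decompose_of_mem_same 𝒜 hcmem
        · simp only [if_neg hmn, Finset.sum_const_zero]
      -- conclude
      have hxy : x - y ∈ I := by
        refine ih (x - y) (sub_mem hxJ (hIJ hyI)) (fun i hi => ?_)
        have h2 : (DirectSum.decompose 𝒜 (x - y) i : R)
            = (DirectSum.decompose 𝒜 x i : R) - (DirectSum.decompose 𝒜 y i : R) :=
          map_sub (dcomp 𝒜 i) x y
        rw [h2]
        rcases Nat.eq_or_lt_of_le hi with h | h
        · rw [← h, hyn n le_rfl, if_pos rfl, ← hcdef, sub_self]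
        · rw [hvan i h, hyn i (Nat.le_of_lt h), if_neg (by omega), sub_self]
      have h3 : x = (x - y) + y := by abel
      rw [h3]
      exact add_mem hxy hyI
    
include hle hnle hmem in
lemma stab
    (hacc : ∀ f : ℕ →o Submodule S R, (∀ k, IsHomogS 𝒜 (f k)) →
      ∃ k₀, ∀ k, k₀ ≤ k → f k = f k₀) :
    ∀ f : ℕ →o Submodule S R, ∃ n, ∀ m, n ≤ m → f n = f m := by
  intro f
  set g : ℕ →o Submodule S R :=
    ⟨fun k => leadIdeal 𝒜 (f k), fun a b hab => leadIdeal_mono 𝒜 (f.mono hab)⟩ with hg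
  obtain ⟨k₀, hk₀⟩ := hacc g (fun k => isHomog_span 𝒜 D hle hnle _
    (fun a ⟨x, _, _, he⟩ => ⟨maxDeg 𝒜 x, he ▸ lead_mem 𝒜 x⟩))
  refine ⟨k₀, fun m hm => ?_⟩
  refine le_antisymm (f.mono hm) ?_
  exact key 𝒜 D hle hnle hmem (f.mono hm) (le_of_eq (hk₀ m hm))

end Hyp

end Unified

end Stmt6Aux

namespace Stmt6Aux

variable {R : Type u} [Ring R] (𝒜 : ℕ → AddSubgroup R) [GradedRing 𝒜]

/-- `Rᵐᵒᵖ` and `R` are isomorphic as left `Rᵐᵒᵖ`-modules. -/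
def opEquiv : Rᵐᵒᵖ ≃ₗ[Rᵐᵒᵖ] R where
  toFun := MulOpposite.unop
  invFun := MulOpposite.op
  map_add' _ _ := rfl
  map_smul' _ _ := rfl
  left_inv _ := rfl
  right_inv _ := rfl

lemma hle_left : ∀ (s : R) {i n : ℕ} {x : R}, x ∈ 𝒜 i → i ≤ n →
    (DirectSum.decompose 𝒜 (s • x) n : R) =
      ((DirectSum.decompose 𝒜 s (n - i) : R)) • x := by
  intro s i n x hx h
  rw [smul_eq_mul, smul_eq_mul]
  exact DirectSum.coe_decompose_mul_of_right_mem_of_le 𝒜 hx h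

lemma hnle_left : ∀ (s : R) {i n : ℕ} {x : R}, x ∈ 𝒜 i → ¬ i ≤ n →
    (DirectSum.decompose 𝒜 (s • x) n : R) = 0 := by
  intro s i n x hx h
  rw [smul_eq_mul]
  exact DirectSum.coe_decompose_mul_of_right_mem_of_not_le 𝒜 hx h

lemma hmem_left : ∀ (s : R) (k : ℕ) {j : ℕ} {x : R}, x ∈ 𝒜 j →
    ((DirectSum.decompose 𝒜 s k : R)) • x ∈ 𝒜 (k + j) := by
  intro s k j x hx
  rw [smul_eq_mul]
  exact SetLike.mul_mem_graded (SetLike.coe_mem _) hx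

lemma hle_right : ∀ (s : Rᵐᵒᵖ) {i n : ℕ} {x : R}, x ∈ 𝒜 i → i ≤ n →
    (DirectSum.decompose 𝒜 (s • x) n : R) =
      (MulOpposite.op ((DirectSum.decompose 𝒜 s.unop (n - i) : R))) • x := by
  intro s i n x hx h
  rw [MulOpposite.smul_eq_mul_unop, MulOpposite.smul_eq_mul_unop, MulOpposite.unop_op]
  exact DirectSum.coe_decompose_mul_of_left_mem_of_le 𝒜 hx h

lemma hnle_right : ∀ (s : Rᵐᵒᵖ) {i n : ℕ} {x : R}, x ∈ 𝒜 i → ¬ i ≤ n →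
    (DirectSum.decompose 𝒜 (s • x) n : R) = 0 := by
  intro s i n x hx h
  rw [MulOpposite.smul_eq_mul_unop]
  exact DirectSum.coe_decompose_mul_of_left_mem_of_not_le 𝒜 hx h

lemma hmem_right : ∀ (s : Rᵐᵒᵖ) (k : ℕ) {j : ℕ} {x : R}, x ∈ 𝒜 j →
    (MulOpposite.op ((DirectSum.decompose 𝒜 s.unop k : R))) • x ∈ 𝒜 (k + j) := by
  intro s k j x hx
  rw [MulOpposite.smul_eq_mul_unop, MulOpposite.unop_op, Nat.add_comm]
  exact SetLike.mul_mem_graded hx (SetLike.coe_mem _)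

end Stmt6Aux


variable {R : Type u} [Ring R] (𝒜 : ℕ → AddSubgroup R) [GradedRing 𝒜]

theorem stmt_6 :
    (IsNoetherianRing R ∧ IsNoetherianRing Rᵐᵒᵖ) ↔
      ((∀ f : ℕ →o Ideal R, (∀ k, IsHomogLeft 𝒜 (f k)) →
          ∃ k₀, ∀ k, k₀ ≤ k → f k = f k₀) ∧
       (∀ f : ℕ →o Submodule Rᵐᵒᵖ R, (∀ k, IsHomogRight 𝒜 (f k)) →
          ∃ k₀, ∀ k, k₀ ≤ k → f k = f k₀)) := by
  constructor
  · rintro ⟨h1, h2⟩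
    constructor
    · intro f _
      obtain ⟨n, hn⟩ := monotone_stabilizes_iff_noetherian.mpr h1 f
      exact ⟨n, fun k hk => (hn k hk).symm⟩
    · intro f _
      have h3 : IsNoetherian Rᵐᵒᵖ R := isNoetherian_of_linearEquiv (Stmt6Aux.opEquiv (R := R))
      obtain ⟨n, hn⟩ := monotone_stabilizes_iff_noetherian.mpr h3 f
      exact ⟨n, fun k hk => (hn k hk).symm⟩
  · rintro ⟨h1, h2⟩
    constructor
    · exact monotone_stabilizes_iff_noetherian.mp
        (Stmt6Aux.stab 𝒜 _ (Stmt6Aux.hle_left 𝒜) (Stmt6Aux.hnle_left 𝒜)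
          (Stmt6Aux.hmem_left 𝒜) (fun f hf => h1 f hf))
    · have h3 : IsNoetherian Rᵐᵒᵖ R := monotone_stabilizes_iff_noetherian.mp
        (Stmt6Aux.stab 𝒜 _ (Stmt6Aux.hle_right 𝒜) (Stmt6Aux.hnle_right 𝒜)
          (Stmt6Aux.hmem_right 𝒜) (fun f hf => h2 f hf))
      exact isNoetherian_of_linearEquiv (Stmt6Aux.opEquiv (R := R)).symm
end

section
/- Let R = ⊕_{i≥0} R_i and S = ⊕_{i≥0} S_i be nonnegatively graded rings such that R_0 and S_0 are noetherian, each R_i is finitely generated as a left and as a right R_0-module, and each S_i is finitely generated as a left and as a right S_0-module. Suppose there is an integer n ≥ 0 and an isomorphism of graded (non-unital) rings φ : R_{≥n} → S_{≥n}, where R_{≥n} = ⊕_{i≥n} R_i. Then R is noetherian if and only if S is noetherian. -/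
/-!
STATEMENT 7: Let `R` and `S` be nonnegatively graded rings such that `R₀` and `S₀` are
noetherian and each `Rᵢ` (resp. `Sᵢ`) is finitely generated as a left and as a right
`R₀`-module (resp. `S₀`-module).  Suppose there is an `n ≥ 0` and an isomorphism of
graded rngs `φ : R_{≥n} → S_{≥n}`.  Then `R` is noetherian if and only if `S` is
noetherian.

Noetherian means left and right noetherian.  The graded rng isomorphism is encoded by a
family of additive isomorphisms `φᵢ : Rᵢ ≃+ Sᵢ` for `i ≥ n` compatible with
multiplication.  Finite generation of `Rᵢ` over `R₀` is encoded concretely: there is a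
finite set `s ⊆ Rᵢ` such that every element of `Rᵢ` is a finite sum of products `r * t`
(resp. `t * r`) with `r ∈ R₀`, `t ∈ s`.
-/

open DirectSum

universe u v

/-- `𝒜 i` is finitely generated as a left module over `𝒜 0`. -/
def PieceFGLeft {R : Type u} [Ring R] (𝒜 : ℕ → AddSubgroup R) (i : ℕ) : Prop :=
  ∃ s : Finset R, (↑s : Set R) ⊆ (𝒜 i : Set R) ∧
    ∀ x ∈ 𝒜 i, x ∈ AddSubgroup.closure {y | ∃ r ∈ 𝒜 0, ∃ t ∈ s, y = r * t}

/-- `𝒜 i` is finitely generated as a right module over `𝒜 0`. -/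
def PieceFGRight {R : Type u} [Ring R] (𝒜 : ℕ → AddSubgroup R) (i : ℕ) : Prop :=
  ∃ s : Finset R, (↑s : Set R) ⊆ (𝒜 i : Set R) ∧
    ∀ x ∈ 𝒜 i, x ∈ AddSubgroup.closure {y | ∃ r ∈ 𝒜 0, ∃ t ∈ s, y = t * r}

set_option maxHeartbeats 1000000
set_option synthInstance.maxHeartbeats 400000

namespace Stmt7Aux

variable {R : Type u} [Ring R] (𝒜 : ℕ → AddSubgroup R) [GradedRing 𝒜]

/-- homogeneous component of `x` in degree `i` -/
noncomputable def cmp (x : R) (i : ℕ) : R := GradedRing.proj 𝒜 i x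

lemma cmp_def (x : R) (i : ℕ) : cmp 𝒜 x i = (DirectSum.decompose 𝒜 x i : R) := rfl

lemma cmp_mem (x : R) (i : ℕ) : cmp 𝒜 x i ∈ 𝒜 i := SetLike.coe_mem _

@[simp] lemma cmp_zero (i : ℕ) : cmp 𝒜 (0 : R) i = 0 :=
  map_zero (GradedRing.proj 𝒜 i)

lemma cmp_add (x y : R) (i : ℕ) : cmp 𝒜 (x + y) i = cmp 𝒜 x i + cmp 𝒜 y i :=
  map_add (GradedRing.proj 𝒜 i) x y

lemma cmp_neg (x : R) (i : ℕ) : cmp 𝒜 (-x) i = -cmp 𝒜 x i :=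
  map_neg (GradedRing.proj 𝒜 i) x

lemma cmp_sub (x y : R) (i : ℕ) : cmp 𝒜 (x - y) i = cmp 𝒜 x i - cmp 𝒜 y i :=
  map_sub (GradedRing.proj 𝒜 i) x y

lemma cmp_of_mem_same {x : R} {i : ℕ} (h : x ∈ 𝒜 i) : cmp 𝒜 x i = x :=
  DirectSum.decompose_of_mem_same 𝒜 h

lemma cmp_of_mem_ne {x : R} {i j : ℕ} (h : x ∈ 𝒜 i) (hij : i ≠ j) : cmp 𝒜 x j = 0 := by
  rw [cmp_def, DirectSum.decompose_of_mem_ne 𝒜 h hij]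

lemma cmp_sum {ι : Type*} (s : Finset ι) (g : ι → R) (i : ℕ) :
    cmp 𝒜 (∑ t ∈ s, g t) i = ∑ t ∈ s, cmp 𝒜 (g t) i :=
  map_sum (GradedRing.proj 𝒜 i) g s

/-- every element is the (finite) sum of its components -/
lemma sum_cmp (x : R) : ∃ F : Finset ℕ, (∀ i ∉ F, cmp 𝒜 x i = 0) ∧ ∑ i ∈ F, cmp 𝒜 x i = x := by
  classical
  refine ⟨(DirectSum.decompose 𝒜 x).support, ?_, ?_⟩
  · intro i hi
    simp only [DFinsupp.notMem_support_iff] at hi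
    rw [cmp_def, hi, ZeroMemClass.coe_zero]
  · exact DirectSum.sum_support_decompose 𝒜 x

/-- There is a degree bound above which all components vanish. -/
lemma exists_bound (x : R) : ∃ d : ℕ, ∀ i, d ≤ i → cmp 𝒜 x i = 0 := by
  classical
  obtain ⟨F, hF, -⟩ := sum_cmp 𝒜 x
  refine ⟨(F.sup id) + 1, fun i hi => ?_⟩
  refine hF i fun hmem => ?_
  have := Finset.le_sup (f := id) hmem
  simp only [id_eq] at this
  omega

lemma eq_sum_of_bound (x : R) (d : ℕ) (h : ∀ i, d ≤ i → cmp 𝒜 x i = 0) :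
    ∑ i ∈ Finset.range d, cmp 𝒜 x i = x := by
  classical
  obtain ⟨F, hF, hsum⟩ := sum_cmp 𝒜 x
  have h1 : ∑ i ∈ Finset.range d, cmp 𝒜 x i
      = ∑ i ∈ F.filter (fun i => i < d), cmp 𝒜 x i := by
    refine (Finset.sum_subset ?_ ?_).symm
    · intro i hi
      exact Finset.mem_range.mpr (Finset.mem_filter.mp hi).2
    · intro i hi hni
      by_cases hiF : i ∈ F
      · refine absurd ?_ hni
        rw [Finset.mem_filter]
        exact ⟨hiF, Finset.mem_range.mp hi⟩
      · exact hF i hiF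
  have h2 : ∑ i ∈ F.filter (fun i => ¬ i < d), cmp 𝒜 x i = 0 :=
    Finset.sum_eq_zero (fun i hi => by
      simp only [Finset.mem_filter, not_lt] at hi
      exact h i hi.2)
  rw [h1]
  conv_rhs => rw [← hsum]
  rw [← Finset.sum_filter_add_sum_filter_not F (fun i => i < d), h2, add_zero]

/-- components of a left product with a homogeneous element -/
lemma cmp_mul_left_of_le {r : R} {j : ℕ} (hr : r ∈ 𝒜 j) (z : R) {m : ℕ} (h : j ≤ m) :
    cmp 𝒜 (r * z) m = r * cmp 𝒜 z (m - j) := by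
  have : m = j + (m - j) := by omega
  conv_lhs => rw [this]
  rw [cmp_def, DirectSum.coe_decompose_mul_add_of_left_mem 𝒜 hr, cmp_def]

lemma cmp_mul_left_of_lt {r : R} {j : ℕ} (hr : r ∈ 𝒜 j) (z : R) {m : ℕ} (h : m < j) :
    cmp 𝒜 (r * z) m = 0 := by
  classical
  obtain ⟨F, hF, hsum⟩ := sum_cmp 𝒜 z
  rw [← hsum, Finset.mul_sum, cmp_sum]
  refine Finset.sum_eq_zero (fun i hi => ?_)
  refine cmp_of_mem_ne 𝒜 (SetLike.mul_mem_graded hr (cmp_mem 𝒜 z i)) ?_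
  omega

/-- a "graded one-sided ideal", given degreewise: contained in `𝒜 d` in degree `d` and
closed under left multiplication by homogeneous elements. -/
def IsGrIdl (c : ℕ → AddSubgroup R) : Prop :=
  (∀ d, c d ≤ 𝒜 d) ∧ ∀ ⦃j d : ℕ⦄ ⦃r y : R⦄, r ∈ 𝒜 j → y ∈ c d → r * y ∈ c (j + d)

/-- the leading-component subgroups of a left ideal -/
def LC (I : Submodule R R) (d : ℕ) : AddSubgroup R where
  carrier := {y | ∃ z ∈ I, cmp 𝒜 z d = y ∧ ∀ i, d < i → cmp 𝒜 z i = 0}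
  zero_mem' := ⟨0, zero_mem _, by simp⟩
  add_mem' := by
    rintro a b ⟨z, hz, rfl, hz2⟩ ⟨w, hw, rfl, hw2⟩
    exact ⟨z + w, add_mem hz hw, (cmp_add 𝒜 z w d).symm ▸ rfl, fun i hi => by
      rw [cmp_add, hz2 i hi, hw2 i hi, add_zero]⟩
  neg_mem' := by
    rintro a ⟨z, hz, rfl, hz2⟩
    exact ⟨-z, neg_mem hz, cmp_neg 𝒜 z d, fun i hi => by rw [cmp_neg, hz2 i hi, neg_zero]⟩

lemma LC_grIdl (I : Submodule R R) : IsGrIdl 𝒜 (LC 𝒜 I) := by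
  constructor
  · rintro d y ⟨z, hz, rfl, -⟩
    exact cmp_mem 𝒜 z d
  · rintro j d r y hr ⟨z, hz, rfl, hz2⟩
    refine ⟨r * z, I.smul_mem r hz, cmp_mul_left_of_le 𝒜 hr z (Nat.le_add_right j d) ▸ ?_, ?_⟩
    · rw [Nat.add_sub_cancel_left]
    · intro i hi
      rcases le_or_gt j i with h | h
      · rw [cmp_mul_left_of_le 𝒜 hr z h, hz2 (i - j) (by omega), mul_zero]
      · exact cmp_mul_left_of_lt 𝒜 hr z h

lemma LC_mono {I J : Submodule R R} (h : I ≤ J) (d : ℕ) : LC 𝒜 I d ≤ LC 𝒜 J d := by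
  rintro y ⟨z, hz, rfl, hz2⟩
  exact ⟨z, h hz, rfl, hz2⟩

lemma eq_of_le_of_LC_le {I J : Submodule R R} (hIJ : I ≤ J)
    (h : ∀ d, LC 𝒜 J d ≤ LC 𝒜 I d) : I = J := by
  have key : ∀ d : ℕ, ∀ x ∈ J, (∀ i, d ≤ i → cmp 𝒜 x i = 0) → x ∈ I := by
    intro d
    induction d with
    | zero =>
      intro x hx hcmp
      have : x = 0 := by
        rw [← eq_sum_of_bound 𝒜 x 0 (fun i _ => hcmp i (Nat.zero_le i))]
        simp
      rw [this]; exact zero_mem _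
    | succ d ih =>
      intro x hx hcmp
      have hxd : cmp 𝒜 x d ∈ LC 𝒜 J d := ⟨x, hx, rfl, fun i hi => hcmp i hi⟩
      obtain ⟨z, hz, hzd, hz2⟩ := h d hxd
      have hxz : x - z ∈ J := sub_mem hx (hIJ hz)
      have : x - z ∈ I := by
        refine ih (x - z) hxz (fun i hi => ?_)
        rcases eq_or_lt_of_le hi with rfl | hlt
        · rw [cmp_sub, hzd, sub_self]
        · rw [cmp_sub, hcmp i hlt, hz2 i hlt, sub_zero]
      have := add_mem this hz
      rwa [sub_add_cancel] at this
  refine le_antisymm hIJ (fun x hx => ?_)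
  obtain ⟨d, hd⟩ := exists_bound 𝒜 x
  exact key d x hx hd

/-- ACC on graded one-sided-ideal functions implies the ring is (left) noetherian. -/
lemma noetherian_of_grACC
    (H : ∀ f : ℕ → ℕ → AddSubgroup R, (∀ k, IsGrIdl 𝒜 (f k)) →
      (∀ k l, k ≤ l → ∀ d, f k d ≤ f l d) →
      ∃ K, ∀ k, K ≤ k → ∀ d, f k d = f K d) :
    IsNoetherianRing R := by
  rw [isNoetherianRing_iff, ← monotone_stabilizes_iff_noetherian]
  intro I
  obtain ⟨K, hK⟩ := H (fun k => LC 𝒜 (I k)) (fun k => LC_grIdl 𝒜 (I k))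
    (fun k l hkl d => LC_mono 𝒜 (I.monotone hkl) d)
  refine ⟨K, fun m hm => ?_⟩
  exact eq_of_le_of_LC_le 𝒜 (I.monotone hm) (fun d => (hK m hm d).le)

lemma cmp_mul_right_add {y : R} {j : ℕ} (hy : y ∈ 𝒜 j) (a : R) (e : ℕ) :
    cmp 𝒜 (a * y) (e + j) = cmp 𝒜 a e * y := by
  rw [cmp_def, DirectSum.coe_decompose_mul_add_of_right_mem 𝒜 hy, cmp_def]

/-! ### degreewise stabilization from noetherianity of the degree-zero part -/

def zeroHom : (𝒜 0) →+* R := (SetLike.GradeZero.subring 𝒜).subtype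

noncomputable local instance zeroModule : Module (𝒜 0) R := Module.compHom R (zeroHom 𝒜)

lemma zero_smul_def (r : 𝒜 0) (x : R) : r • x = (r : R) * x := rfl

/-- `𝒜 d` as a `𝒜 0`-submodule of `R` -/
def pieceSub (d : ℕ) : Submodule (𝒜 0) R where
  carrier := 𝒜 d
  add_mem' := add_mem
  zero_mem' := zero_mem _
  smul_mem' := fun r x hx => by
    have := SetLike.mul_mem_graded r.2 hx
    rwa [zero_add] at this

lemma pieceSub_fg {d : ℕ} (hfg : PieceFGLeft 𝒜 d) : (pieceSub 𝒜 d).FG := by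
  obtain ⟨s, hs, hgen⟩ := hfg
  refine ⟨s, le_antisymm (Submodule.span_le.mpr ?_) ?_⟩
  · intro t ht
    exact hs ht
  · intro x hx
    refine (AddSubgroup.closure_le
      ((Submodule.span (𝒜 0) (s : Set R)).toAddSubgroup)).mpr ?_ (hgen x hx)
    rintro y ⟨r, hr, t, ht, rfl⟩
    have : (⟨r, hr⟩ : 𝒜 0) • t ∈ Submodule.span (𝒜 0) (s : Set R) :=
      Submodule.smul_mem _ _ (Submodule.subset_span ht)
    rwa [zero_smul_def] at this

lemma degree_stabilizes (hR0 : IsNoetherianRing (𝒜 0)) {d : ℕ} (hfg : PieceFGLeft 𝒜 d)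
    (f : ℕ → AddSubgroup R) (hle : ∀ k, f k ≤ 𝒜 d)
    (hsm : ∀ k, ∀ r ∈ 𝒜 0, ∀ y ∈ f k, r * y ∈ f k)
    (hmono : ∀ k l, k ≤ l → f k ≤ f l) : ∃ K, ∀ k, K ≤ k → f k = f K := by
  haveI := hR0
  haveI : IsNoetherian (𝒜 0) (pieceSub 𝒜 d) :=
    isNoetherian_of_fg_of_noetherian _ (pieceSub_fg 𝒜 hfg)
  set g : ℕ → Submodule (𝒜 0) R := fun k =>
    { carrier := f k
      add_mem' := add_mem
      zero_mem' := zero_mem _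
      smul_mem' := fun r x hx => hsm k r r.2 x hx } with hg
  have hgle : ∀ k, g k ≤ pieceSub 𝒜 d := fun k => hle k
  set c : ℕ →o Submodule (𝒜 0) (pieceSub 𝒜 d) :=
    ⟨fun k => (g k).comap (pieceSub 𝒜 d).subtype,
      fun k l hkl => Submodule.comap_mono (fun x hx => hmono k l hkl hx)⟩ with hc
  obtain ⟨K, hK⟩ := monotone_stabilizes_iff_noetherian.mpr ‹_› c
  refine ⟨K, fun k hk => ?_⟩
  have h1 : ∀ m, Submodule.map (pieceSub 𝒜 d).subtype (c m) = g m := by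
    intro m
    have hcm : c m = (g m).comap (pieceSub 𝒜 d).subtype := rfl
    rw [hcm, Submodule.map_comap_subtype]
    exact inf_eq_right.mpr (hgle m)
  have h2 : g k = g K := by
    rw [← h1 k, ← h1 K, ← hK k hk]
  ext x
  exact SetLike.ext_iff.mp h2 x

section Core

variable {S : Type v} [Ring S] (ℬ : ℕ → AddSubgroup S) [GradedRing ℬ]

/-- The main transfer lemma: if `S` is left noetherian, `𝒜 0` is left noetherian,
the pieces of `𝒜` are finitely generated left `𝒜 0`-modules, and there is a graded
rng isomorphism `R_{≥n} ≅ S_{≥n}`, then `R` is left noetherian. -/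
theorem core (hR0 : IsNoetherianRing (𝒜 0)) (hRfg : ∀ i, PieceFGLeft 𝒜 i)
    (n : ℕ) (φ : ∀ i, n ≤ i → ((𝒜 i) ≃+ (ℬ i)))
    (hφ : ∀ (i j : ℕ) (hi : n ≤ i) (hj : n ≤ j) (x : 𝒜 i) (y : 𝒜 j),
      (φ (i + j) (le_trans hi (Nat.le_add_right i j))
          ⟨(x : R) * (y : R), SetLike.mul_mem_graded x.2 y.2⟩ : S) =
        (φ i hi x : S) * (φ j hj y : S))
    (hS : IsNoetherianRing S) : IsNoetherianRing R := by
  classical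
  apply noetherian_of_grACC 𝒜
  intro f hGr hMono
  -- the images of the pieces of the chain inside `S`
  set E : ℕ → ∀ d, n ≤ d → AddSubgroup S := fun k d hd =>
    AddSubgroup.map ((ℬ d).subtype.comp (φ d hd).toAddMonoidHom)
      ((f k d).addSubgroupOf (𝒜 d)) with hE
  have memE : ∀ k d (hd : n ≤ d) (s : S),
      s ∈ E k d hd ↔ ∃ x : 𝒜 d, (x : R) ∈ f k d ∧ (φ d hd x : S) = s := by
    intro k d hd s
    simp only [hE, AddSubgroup.mem_map, AddSubgroup.mem_addSubgroupOf,
      AddMonoidHom.coe_comp, Function.comp_apply, AddEquiv.coe_toAddMonoidHom,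
      AddSubgroup.coe_subtype]
  have Ele : ∀ k d (hd : n ≤ d), E k d hd ≤ ℬ d := by
    intro k d hd s hs
    obtain ⟨x, -, rfl⟩ := (memE k d hd s).mp hs
    exact SetLike.coe_mem _
  have Emono : ∀ k l, k ≤ l → ∀ d (hd : n ≤ d), E k d hd ≤ E l d hd := by
    intro k l hkl d hd s hs
    obtain ⟨x, hx, rfl⟩ := (memE k d hd s).mp hs
    exact (memE l d hd _).mpr ⟨x, hMono k l hkl d hx, rfl⟩
  set U : ℕ → Set S := fun k => ⋃ (d : ℕ) (hd : n ≤ d), (E k d hd : Set S) with hU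
  have Umono : ∀ k l, k ≤ l → U k ⊆ U l := by
    intro k l hkl s hs
    rw [hU, Set.mem_iUnion] at hs ⊢
    obtain ⟨d, hs⟩ := hs
    rw [Set.mem_iUnion] at hs
    obtain ⟨hd, hs⟩ := hs
    exact ⟨d, Set.mem_iUnion.mpr ⟨hd, Emono k l hkl d hd hs⟩⟩
  set N : ℕ →o Submodule S S :=
    ⟨fun k => Submodule.span S (U k),
      fun k l hkl => Submodule.span_mono (Umono k l hkl)⟩ with hN
  haveI : IsNoetherian S S := hS
  obtain ⟨K₀, hK₀⟩ := monotone_stabilizes_iff_noetherian.mpr this N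
  -- a finite generating set of `N K₀` inside `U K₀`
  obtain ⟨V, hVU, hVspan⟩ : ∃ V : Finset S, ↑V ⊆ U K₀ ∧
      Submodule.span S (V : Set S) = N K₀ := by
    obtain ⟨W, hW⟩ := IsNoetherian.noetherian (N K₀)
    have hmem : ∀ w : {w // w ∈ W}, ∃ T : Finset S, ↑T ⊆ U K₀ ∧
        w.1 ∈ Submodule.span S (T : Set S) := by
      intro w
      refine Submodule.mem_span_finite_of_mem_span ?_
      show w.1 ∈ Submodule.span S (U K₀)
      have : w.1 ∈ N K₀ := by
        rw [← hW]; exact Submodule.subset_span w.2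
      exact this
    choose T hT1 hT2 using hmem
    refine ⟨W.attach.biUnion T, ?_, le_antisymm ?_ ?_⟩
    · intro x hx
      simp only [Finset.coe_biUnion, Set.mem_iUnion, Finset.mem_coe] at hx
      obtain ⟨w, -, hw⟩ := hx
      exact hT1 w hw
    · refine Submodule.span_le.mpr ?_
      intro x hx
      simp only [Finset.coe_biUnion, Set.mem_iUnion, Finset.mem_coe] at hx
      obtain ⟨w, -, hw⟩ := hx
      exact Submodule.subset_span (hT1 w hw)
    · rw [← hW]
      refine Submodule.span_le.mpr (fun w hw => ?_)
      have : w ∈ Submodule.span S ((T ⟨w, hw⟩ : Finset S) : Set S) := hT2 ⟨w, hw⟩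
      refine Submodule.span_mono ?_ this
      intro y hy
      exact Finset.mem_coe.mpr (Finset.mem_biUnion.mpr ⟨⟨w, hw⟩, Finset.mem_attach _ _, hy⟩)
  -- degrees of the generators
  have hdegex : ∀ y : {y // y ∈ V}, ∃ d : ℕ, ∃ hd : n ≤ d, y.1 ∈ E K₀ d hd := by
    intro y
    have := hVU y.2
    rw [hU, Set.mem_iUnion] at this
    obtain ⟨d, hmem⟩ := this
    rw [Set.mem_iUnion] at hmem
    obtain ⟨hd, hmem⟩ := hmem
    exact ⟨d, hd, hmem⟩
  choose dg hdg1 hdg2 using hdegex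
  set D : ℕ := n + V.attach.sup dg with hD
  have hnD : n ≤ D := Nat.le_add_right n _
  -- main claim: in degrees `≥ D` the ideal `N K₀` has homogeneous parts inside `E K₀`
  have claimA : ∀ d (hdD : D ≤ d) (s : S), s ∈ ℬ d → s ∈ N K₀ →
      s ∈ E K₀ d (le_trans hnD hdD) := by
    intro d hdD s hsB hsN
    rw [← hVspan] at hsN
    obtain ⟨a, -, ha⟩ := Submodule.mem_span_finset.mp hsN
    have hrep : ∑ y ∈ V.attach, a y.1 * y.1 = s := by
      rw [Finset.sum_attach V (fun t => a t * t)]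
      simpa [smul_eq_mul] using ha
    have hsum : cmp ℬ s d ∈ E K₀ d (le_trans hnD hdD) := by
      rw [← hrep, cmp_sum]
      refine sum_mem (fun y hy => ?_)
      -- single term
      have hj : dg y ≤ V.attach.sup dg := Finset.le_sup (Finset.mem_attach _ _)
      obtain ⟨e, rfl⟩ : ∃ e, d = e + dg y := ⟨d - dg y, by omega⟩
      have he : n ≤ e := by omega
      have hyB : y.1 ∈ ℬ (dg y) := Ele K₀ (dg y) (hdg1 y) (hdg2 y)
      rw [cmp_mul_right_add ℬ hyB]
      have hc'B : cmp ℬ (a y.1) e ∈ ℬ e := cmp_mem ℬ _ e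
      obtain ⟨x, hxf, hxφ⟩ := (memE K₀ (dg y) (hdg1 y) y.1).mp (hdg2 y)
      set w : 𝒜 e := (φ e he).symm ⟨cmp ℬ (a y.1) e, hc'B⟩ with hw
      have hwφ : (φ e he w : S) = cmp ℬ (a y.1) e := by
        rw [hw, AddEquiv.apply_symm_apply]
      have hprod := hφ e (dg y) he (hdg1 y) w x
      rw [hwφ, hxφ] at hprod
      refine (memE K₀ (e + dg y) _ _).mpr
        ⟨⟨(w : R) * (x : R), SetLike.mul_mem_graded w.2 x.2⟩, ?_, ?_⟩
      · exact (hGr K₀).2 w.2 hxf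
      · exact hprod
    rwa [cmp_of_mem_same ℬ hsB] at hsum
  -- per-degree stabilization in low degrees
  have hperdeg : ∀ d : ℕ, ∃ Kd, ∀ k, Kd ≤ k → f k d = f Kd d := by
    intro d
    refine degree_stabilizes 𝒜 hR0 (hRfg d) (fun k => f k d) (fun k => (hGr k).1 d)
      (fun k r hr y hy => ?_) (fun k l hkl => hMono k l hkl d)
    have := (hGr k).2 hr hy
    rwa [zero_add] at this
  choose Kf hKf using hperdeg
  set K₁ : ℕ := max K₀ ((Finset.range D).sup Kf) with hK₁
  have hK₀K₁ : K₀ ≤ K₁ := le_max_left _ _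
  refine ⟨K₁, fun k hk d => ?_⟩
  by_cases hdD : d < D
  · have h1 : Kf d ≤ K₁ := le_trans (Finset.le_sup (Finset.mem_range.mpr hdD)) (le_max_right _ _)
    rw [hKf d k (h1.trans hk), hKf d K₁ h1]
  · push_neg at hdD
    have key : ∀ m, K₀ ≤ m → f m d = f K₀ d := by
      intro m hm
      refine le_antisymm ?_ (hMono K₀ m hm d)
      intro x hx
      have hxA : x ∈ 𝒜 d := (hGr m).1 d hx
      have hnd : n ≤ d := le_trans hnD hdD
      have h1 : (φ d hnd ⟨x, hxA⟩ : S) ∈ E m d hnd := (memE m d hnd _).mpr ⟨⟨x, hxA⟩, hx, rfl⟩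
      have h2 : (φ d hnd ⟨x, hxA⟩ : S) ∈ N K₀ := by
        have hUm : ((E m d hnd : AddSubgroup S) : Set S) ⊆ U m := by
          intro t ht
          rw [hU, Set.mem_iUnion]
          exact ⟨d, Set.mem_iUnion.mpr ⟨hnd, ht⟩⟩
        have h3 : (φ d hnd ⟨x, hxA⟩ : S) ∈ N m := Submodule.subset_span (hUm h1)
        rwa [← hK₀ m hm] at h3
      have h4 := claimA d hdD _ (SetLike.coe_mem _) h2
      obtain ⟨x', hx'f, hx'φ⟩ := (memE K₀ d _ _).mp h4
      have hxx : x' = ⟨x, hxA⟩ := (φ d (le_trans hnD hdD)).injective (Subtype.coe_injective hx'φ)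
      rw [hxx] at hx'f
      exact hx'f
    rw [key k (hK₀K₁.trans hk), key K₁ hK₀K₁]

end Core

section Op

/-- an additive subgroup of `R`, viewed inside `Rᵐᵒᵖ` -/
def mop (H : AddSubgroup R) : AddSubgroup Rᵐᵒᵖ where
  carrier := MulOpposite.unop ⁻¹' (H : Set R)
  zero_mem' := H.zero_mem
  add_mem' := fun ha hb => H.add_mem ha hb
  neg_mem' := fun ha => H.neg_mem ha

lemma mem_mop {H : AddSubgroup R} {x : Rᵐᵒᵖ} : x ∈ mop H ↔ x.unop ∈ H := Iff.rfl

/-- `H` and `mop H` are additively equivalent -/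
def mopEquiv (H : AddSubgroup R) : H ≃+ mop H where
  toFun x := ⟨MulOpposite.op x.1, x.2⟩
  invFun x := ⟨x.1.unop, x.2⟩
  left_inv x := rfl
  right_inv x := rfl
  map_add' x y := rfl

instance mopGradedMonoid : SetLike.GradedMonoid (fun i => mop (𝒜 i)) where
  one_mem := by
    show (1 : Rᵐᵒᵖ).unop ∈ 𝒜 0
    exact SetLike.one_mem_graded 𝒜
  mul_mem := by
    intro i j x y hx hy
    show (x * y).unop ∈ 𝒜 (i + j)
    have h : y.unop * x.unop ∈ 𝒜 (j + i) := SetLike.mul_mem_graded hy hx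
    rw [Nat.add_comm j i] at h
    exact h

/-- the decomposition map for the opposite grading -/
noncomputable def mopDecompose (x : Rᵐᵒᵖ) : ⨁ i, (mop (𝒜 i)) :=
  DFinsupp.mapRange (fun i (y : 𝒜 i) => mopEquiv (𝒜 i) y) (fun i => map_zero _)
    (DirectSum.decompose 𝒜 x.unop)

lemma coe_symm_eq (w : ⨁ i, 𝒜 i) :
    (DirectSum.decompose 𝒜).symm w = DirectSum.coeAddMonoidHom 𝒜 w := rfl

lemma mopDecompose_coe (w : ⨁ i, 𝒜 i) :
    DirectSum.coeAddMonoidHom (fun i => mop (𝒜 i))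
        (DFinsupp.mapRange (fun i (y : 𝒜 i) => mopEquiv (𝒜 i) y) (fun i => map_zero _) w)
      = MulOpposite.op (DirectSum.coeAddMonoidHom 𝒜 w) := by
  induction w using DirectSum.induction_on with
  | zero => simp
  | of i x =>
    rw [show (DirectSum.of (fun i => (𝒜 i : AddSubgroup R)) i x) = DFinsupp.single i x from rfl,
      DFinsupp.mapRange_single]
    rw [show (DFinsupp.single i (mopEquiv (𝒜 i) x) : ⨁ i, (mop (𝒜 i)))
        = DirectSum.of (fun i => (mop (𝒜 i))) i (mopEquiv (𝒜 i) x) from rfl,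
      show (DFinsupp.single i x : ⨁ i, (𝒜 i)) = DirectSum.of (fun i => (𝒜 i : AddSubgroup R)) i x
        from rfl]
    rw [DirectSum.coeAddMonoidHom_of, DirectSum.coeAddMonoidHom_of]
    rfl
  | add a b ha hb =>
    rw [DFinsupp.mapRange_add _ _ (fun i x y => map_add _ x y), map_add, map_add, ha, hb,
      MulOpposite.op_add]

lemma mopDecompose_add (x y : Rᵐᵒᵖ) :
    mopDecompose 𝒜 (x + y) = mopDecompose 𝒜 x + mopDecompose 𝒜 y := by
  unfold mopDecompose
  rw [MulOpposite.unop_add, DirectSum.decompose_add,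
    DFinsupp.mapRange_add _ _ (fun i x y => map_add _ x y)]

noncomputable instance mopDecomposition : DirectSum.Decomposition (fun i => mop (𝒜 i)) where
  decompose' := mopDecompose 𝒜
  left_inv := by
    intro x
    show DirectSum.coeAddMonoidHom _ (mopDecompose 𝒜 x) = x
    unfold mopDecompose
    rw [mopDecompose_coe, ← coe_symm_eq, Equiv.symm_apply_apply, MulOpposite.op_unop]
  right_inv := by
    intro w
    induction w using DirectSum.induction_on with
    | zero =>
      rw [map_zero]
      unfold mopDecompose
      rw [show ((0 : Rᵐᵒᵖ).unop) = 0 from rfl, DirectSum.decompose_zero,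
        DFinsupp.mapRange_zero]
    | of i x =>
      have hx : (x : Rᵐᵒᵖ).unop ∈ 𝒜 i := x.2
      rw [DirectSum.coeAddMonoidHom_of]
      unfold mopDecompose
      rw [DirectSum.decompose_of_mem 𝒜 hx,
        show (DirectSum.of (fun j => (𝒜 j : AddSubgroup R)) i ⟨(x : Rᵐᵒᵖ).unop, hx⟩ : ⨁ j, 𝒜 j)
          = DFinsupp.single i ⟨(x : Rᵐᵒᵖ).unop, hx⟩ from rfl, DFinsupp.mapRange_single,
        show (mopEquiv (𝒜 i) ⟨(x : Rᵐᵒᵖ).unop, hx⟩) = x from Subtype.ext (MulOpposite.op_unop _)]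
      rfl
    | add a b ha hb =>
      rw [map_add, mopDecompose_add, ha, hb]

noncomputable instance mopGradedRing : GradedRing (fun i => mop (𝒜 i)) :=
  { mopGradedMonoid 𝒜, mopDecomposition 𝒜 with }

end Op

section Transport

variable {S : Type v} [Ring S] (ℬ : ℕ → AddSubgroup S) [GradedRing ℬ] (n : ℕ)

/-- the multiplicativity condition on the family `φ` -/
def GrMul (φ : ∀ i, n ≤ i → ((𝒜 i) ≃+ (ℬ i))) : Prop :=
  ∀ (i j : ℕ) (hi : n ≤ i) (hj : n ≤ j) (x : 𝒜 i) (y : 𝒜 j),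
    (φ (i + j) (le_trans hi (Nat.le_add_right i j))
        ⟨(x : R) * (y : R), SetLike.mul_mem_graded x.2 y.2⟩ : S) =
      (φ i hi x : S) * (φ j hj y : S)

lemma phi_congr (φ : ∀ i, n ≤ i → ((𝒜 i) ≃+ (ℬ i))) {i i' : ℕ} (e : i = i')
    (hi : n ≤ i) (hi' : n ≤ i') {a : R} (pa : a ∈ 𝒜 i) (pa' : a ∈ 𝒜 i') :
    (φ i hi ⟨a, pa⟩ : S) = (φ i' hi' ⟨a, pa'⟩ : S) := by subst e; rfl

/-- the inverse family -/
def symmφ (φ : ∀ i, n ≤ i → ((𝒜 i) ≃+ (ℬ i))) : ∀ i, n ≤ i → ((ℬ i) ≃+ (𝒜 i)) :=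
  fun i hi => (φ i hi).symm

lemma grMul_symm {φ : ∀ i, n ≤ i → ((𝒜 i) ≃+ (ℬ i))} (hφ : GrMul 𝒜 ℬ n φ) :
    GrMul ℬ 𝒜 n (symmφ 𝒜 ℬ n φ) := by
  intro i j hi hj x y
  set x' := (φ i hi).symm x with hx'
  set y' := (φ j hj).symm y with hy'
  have h := hφ i j hi hj x' y'
  rw [hx', hy', AddEquiv.apply_symm_apply, AddEquiv.apply_symm_apply] at h
  have h2 : (⟨(x : S) * (y : S), SetLike.mul_mem_graded x.2 y.2⟩ : ℬ (i + j))
      = φ (i + j) (le_trans hi (Nat.le_add_right i j))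
        ⟨(x' : R) * (y' : R), SetLike.mul_mem_graded x'.2 y'.2⟩ := Subtype.ext h.symm
  show (((φ (i + j) (le_trans hi (Nat.le_add_right i j))).symm
      ⟨(x : S) * (y : S), SetLike.mul_mem_graded x.2 y.2⟩ : 𝒜 (i + j)) : R)
    = ((φ i hi).symm x : R) * ((φ j hj).symm y : R)
  rw [h2, AddEquiv.symm_apply_apply]

/-- the opposite family -/
def opφ (φ : ∀ i, n ≤ i → ((𝒜 i) ≃+ (ℬ i))) :
    ∀ i, n ≤ i → ((mop (𝒜 i)) ≃+ (mop (ℬ i))) :=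
  fun i hi => ((mopEquiv (𝒜 i)).symm.trans (φ i hi)).trans (mopEquiv (ℬ i))

lemma opφ_coe {φ : ∀ i, n ≤ i → ((𝒜 i) ≃+ (ℬ i))} {i : ℕ} (hi : n ≤ i) (z : mop (𝒜 i)) :
    ((opφ 𝒜 ℬ n φ i hi z : mop (ℬ i)) : Sᵐᵒᵖ)
      = MulOpposite.op (φ i hi ⟨(z : Rᵐᵒᵖ).unop, z.2⟩ : S) := rfl

lemma grMul_op {φ : ∀ i, n ≤ i → ((𝒜 i) ≃+ (ℬ i))} (hφ : GrMul 𝒜 ℬ n φ) :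
    GrMul (fun i => mop (𝒜 i)) (fun i => mop (ℬ i)) n (opφ 𝒜 ℬ n φ) := by
  intro i j hi hj x y
  rw [opφ_coe, opφ_coe, opφ_coe]
  rw [show MulOpposite.op (φ i hi ⟨(x : Rᵐᵒᵖ).unop, x.2⟩ : S)
        * MulOpposite.op (φ j hj ⟨(y : Rᵐᵒᵖ).unop, y.2⟩ : S)
      = MulOpposite.op ((φ j hj ⟨(y : Rᵐᵒᵖ).unop, y.2⟩ : S)
        * (φ i hi ⟨(x : Rᵐᵒᵖ).unop, x.2⟩ : S)) from rfl]
  rw [← hφ j i hj hi ⟨(y : Rᵐᵒᵖ).unop, y.2⟩ ⟨(x : Rᵐᵒᵖ).unop, x.2⟩]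
  congr 1
  exact phi_congr 𝒜 ℬ n φ (Nat.add_comm i j) _ _ _ _

noncomputable local instance mopZeroRing : Ring ↥(mop (𝒜 0)) :=
  SetLike.GradeZero.instRing (fun i => mop (𝒜 i))

/-- transporting noetherianity of the degree-zero piece to the opposite side -/
def mopZeroRingEquiv : (𝒜 0)ᵐᵒᵖ ≃+* ↥(mop (𝒜 0)) where
  toFun x := ⟨MulOpposite.op (x.unop : R), x.unop.2⟩
  invFun y := MulOpposite.op ⟨(y : Rᵐᵒᵖ).unop, y.2⟩
  left_inv x := rfl
  right_inv y := rfl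
  map_add' x y := rfl
  map_mul' x y := rfl

lemma mop_zero_noetherian (h : IsNoetherianRing (𝒜 0)ᵐᵒᵖ) :
    IsNoetherianRing (mop (𝒜 0)) :=
  isNoetherianRing_of_ringEquiv _ (mopZeroRingEquiv 𝒜)

lemma pieceFGLeft_mop {i : ℕ} (h : PieceFGRight 𝒜 i) :
    PieceFGLeft (fun i => mop (𝒜 i)) i := by
  classical
  obtain ⟨s, hs, hgen⟩ := h
  refine ⟨s.image (MulOpposite.op : R → Rᵐᵒᵖ), ?_, ?_⟩
  · intro x hx
    simp only [Finset.coe_image, Set.mem_image, Finset.mem_coe] at hx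
    obtain ⟨t, ht, rfl⟩ := hx
    exact hs ht
  · intro x hx
    have hx' : (x : Rᵐᵒᵖ).unop ∈ 𝒜 i := hx
    have h1 := hgen _ hx'
    have h2 : x ∈ AddSubgroup.map (MulOpposite.opAddEquiv (α := R)).toAddMonoidHom
        (AddSubgroup.closure {y | ∃ r ∈ 𝒜 0, ∃ t ∈ s, y = t * r}) :=
      ⟨(x : Rᵐᵒᵖ).unop, h1, MulOpposite.op_unop _⟩
    rw [AddMonoidHom.map_closure] at h2
    refine AddSubgroup.closure_mono ?_ h2
    rintro y ⟨z, ⟨r, hr, t, ht, rfl⟩, rfl⟩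
    refine ⟨MulOpposite.op r, hr, MulOpposite.op t, ?_, rfl⟩
    exact Finset.mem_image_of_mem _ ht

end Transport

end Stmt7Aux

open Stmt7Aux

theorem stmt_7 {R : Type u} {S : Type v} [Ring R] [Ring S]
    (𝒜 : ℕ → AddSubgroup R) [GradedRing 𝒜]
    (ℬ : ℕ → AddSubgroup S) [GradedRing ℬ]
    -- `R₀` and `S₀` are noetherian:
    (hR0 : IsNoetherianRing (𝒜 0) ∧ IsNoetherianRing (𝒜 0)ᵐᵒᵖ)
    (hS0 : IsNoetherianRing (ℬ 0) ∧ IsNoetherianRing (ℬ 0)ᵐᵒᵖ)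
    -- each graded piece is finitely generated on both sides over the degree-zero part:
    (hRfg : ∀ i, PieceFGLeft 𝒜 i ∧ PieceFGRight 𝒜 i)
    (hSfg : ∀ i, PieceFGLeft ℬ i ∧ PieceFGRight ℬ i)
    -- a graded rng isomorphism `R_{≥n} ≅ S_{≥n}`:
    (n : ℕ) (φ : ∀ i, n ≤ i → ((𝒜 i) ≃+ (ℬ i)))
    (hφ : ∀ (i j : ℕ) (hi : n ≤ i) (hj : n ≤ j) (x : 𝒜 i) (y : 𝒜 j),
      (φ (i + j) (le_trans hi (Nat.le_add_right i j))
          ⟨(x : R) * (y : R), SetLike.mul_mem_graded x.2 y.2⟩ : S) =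
        (φ i hi x : S) * (φ j hj y : S)) :
    (IsNoetherianRing R ∧ IsNoetherianRing Rᵐᵒᵖ) ↔
      (IsNoetherianRing S ∧ IsNoetherianRing Sᵐᵒᵖ) := by
  have hφ' : GrMul 𝒜 ℬ n φ := hφ
  constructor
  · rintro ⟨h1, h2⟩
    refine ⟨?_, ?_⟩
    · exact core ℬ 𝒜 hS0.1 (fun i => (hSfg i).1) n (symmφ 𝒜 ℬ n φ)
        (grMul_symm 𝒜 ℬ n hφ') h1
    · exact core (fun i => mop (ℬ i)) (fun i => mop (𝒜 i))
        (mop_zero_noetherian ℬ hS0.2) (fun i => pieceFGLeft_mop ℬ (hSfg i).2) n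
        (opφ ℬ 𝒜 n (symmφ 𝒜 ℬ n φ)) (grMul_op ℬ 𝒜 n (grMul_symm 𝒜 ℬ n hφ')) h2
  · rintro ⟨h1, h2⟩
    refine ⟨?_, ?_⟩
    · exact core 𝒜 ℬ hR0.1 (fun i => (hRfg i).1) n φ hφ' h1
    · exact core (fun i => mop (𝒜 i)) (fun i => mop (ℬ i))
        (mop_zero_noetherian 𝒜 hR0.2) (fun i => pieceFGLeft_mop 𝒜 (hRfg i).2) n
        (opφ 𝒜 ℬ n φ) (grMul_op 𝒜 ℬ n hφ') h2
end

section
/- Let Λ be an artin algebra, a an idempotent of Λ, S a simple Λ-module not annihilated by the two-sided ideal ΛaΛ, and P the projective cover of S. Then aP is a projective aΛa-module. -/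
/-!
STATEMENT 13: Let `Λ` be an artin algebra, `a` an idempotent of `Λ`, `S` a simple
`Λ`-module not annihilated by the two-sided ideal `ΛaΛ`, and `P` the projective cover of
`S`.  Then `aP` is a projective `aΛa`-module.

`S` not being annihilated by `ΛaΛ` is equivalent to the existence of `s : S` with
`a • s ≠ 0`.  A projective cover of `S` is a surjection `f : P → S` from a projective
module `P` with superfluous kernel.  The corner ring `aΛa` is realised as
`{x : Λ // a * x * a = x}` with identity `a`, and `aP = {p : P // a • p = p}`.
-/

universe u

section CornerRing

variable {Λ : Type u} [Ring Λ]

lemma corner_left {a : Λ} (ha : IsIdempotentElem a) {x : Λ}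
    (hx : a * x * a = x) : a * x = x := by
  conv_lhs => rw [← hx]
  rw [← mul_assoc, ← mul_assoc, ha.eq, hx]

lemma corner_right {a : Λ} (ha : IsIdempotentElem a) {x : Λ}
    (hx : a * x * a = x) : x * a = x := by
  conv_lhs => rw [← hx]
  rw [mul_assoc, ha.eq, hx]

variable (a : Λ) [Fact (IsIdempotentElem a)]

/-- The corner (non-unital) subring `aΛa` of `Λ` determined by an idempotent `a`. -/
def cornerSubring : NonUnitalSubring Λ where
  carrier := {x | a * x * a = x}
  zero_mem' := by simp
  add_mem' {x y} hx hy := by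
    simp only [Set.mem_setOf_eq] at *
    rw [mul_add, add_mul, hx, hy]
  neg_mem' {x} hx := by
    simp only [Set.mem_setOf_eq] at *
    rw [mul_neg, neg_mul, hx]
  mul_mem' {x y} hx hy := by
    simp only [Set.mem_setOf_eq] at *
    have hx' := corner_left (Fact.out : IsIdempotentElem a) hx
    have hy' := corner_right (Fact.out : IsIdempotentElem a) hy
    rw [← mul_assoc a x y, hx', mul_assoc x y a, hy']

/-- The corner ring `aΛa` (unital, with identity `a`). -/
def Corner : Type u := cornerSubring a

instance : NonUnitalRing (Corner a) :=
  inferInstanceAs (NonUnitalRing (cornerSubring a))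

noncomputable instance : Ring (Corner a) :=
  { (inferInstance : NonUnitalRing (Corner a)) with
    one := ⟨a, by
      show a * a * a = a
      rw [(Fact.out : IsIdempotentElem a).eq, (Fact.out : IsIdempotentElem a).eq]⟩
    one_mul := fun x => Subtype.ext (corner_left Fact.out x.2)
    mul_one := fun x => Subtype.ext (corner_right Fact.out x.2) }

variable (M : Type u) [AddCommGroup M] [Module Λ M]

/-- The additive subgroup `aM` of a `Λ`-module `M`. -/
def cornerModSub : AddSubgroup M where
  carrier := {m | a • m = m}
  zero_mem' := by simp
  add_mem' {x y} hx hy := by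
    simp only [Set.mem_setOf_eq, smul_add] at *
    rw [hx, hy]
  neg_mem' {x} hx := by
    simp only [Set.mem_setOf_eq, smul_neg] at *
    rw [hx]

/-- `aM`, the corner module of `M`, as a module over the corner ring `aΛa`. -/
def CornerMod : Type u := cornerModSub a M

instance : AddCommGroup (CornerMod a M) :=
  inferInstanceAs (AddCommGroup (cornerModSub a M))

instance : Module (Corner a) (CornerMod a M) where
  smul r m := ⟨r.1 • m.1, by
    show a • (r.1 • m.1) = r.1 • m.1
    rw [← mul_smul, corner_left Fact.out r.2]⟩
  one_smul m := Subtype.ext m.2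
  mul_smul r s m := Subtype.ext (mul_smul r.1 s.1 m.1)
  smul_zero r := Subtype.ext (smul_zero r.1)
  smul_add r m n := Subtype.ext (smul_add r.1 m.1 n.1)
  add_smul r s m := Subtype.ext (add_smul r.1 s.1 m.1)
  zero_smul m := Subtype.ext (zero_smul Λ m.1)

instance : Fact (IsIdempotentElem (MulOpposite.op a)) :=
  ⟨congrArg MulOpposite.op (Fact.out : IsIdempotentElem a).eq⟩

end CornerRing


theorem stmt_13 {R₀ : Type u} [CommRing R₀] [IsArtinianRing R₀]
    {Λ : Type u} [Ring Λ] [Algebra R₀ Λ] [Module.Finite R₀ Λ]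
    (a : Λ) [Fact (IsIdempotentElem a)]
    (S : Type u) [AddCommGroup S] [Module Λ S] [IsSimpleModule Λ S]
    (hann : ∃ s : S, a • s ≠ 0)
    (P : Type u) [AddCommGroup P] [Module Λ P] [Module.Projective Λ P]
    (f : P →ₗ[Λ] S) (hsurj : Function.Surjective f)
    (hsmall : ∀ N : Submodule Λ P, N ⊔ LinearMap.ker f = ⊤ → N = ⊤) :
    Module.Projective (Corner a) (CornerMod a P) := by
  classical
  have ha : IsIdempotentElem a := Fact.out
  obtain ⟨s, hs⟩ := hann
  set s' : S := a • s with hs'def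
  have has' : a • s' = s' := by rw [hs'def, ← mul_smul, ha.eq]
  -- every element of S is a multiple of s'
  have gsurj : ∀ t : S, ∃ l : Λ, l • s' = t := by
    have hspan : Submodule.span Λ {s'} = ⊤ := by
      rcases eq_bot_or_eq_top (Submodule.span Λ {s'}) with h | h
      · exfalso
        apply hs
        have : s' ∈ Submodule.span Λ {s'} := Submodule.mem_span_singleton_self s'
        rw [h] at this
        simpa using this
      · exact h
    intro t
    have ht : t ∈ Submodule.span Λ {s'} := hspan ▸ trivial
    rwa [Submodule.mem_span_singleton] at ht
  obtain ⟨q, hq⟩ := hsurj s'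
  set p₀ : P := a • q with hp₀def
  have hfp₀ : f p₀ = s' := by rw [hp₀def, map_smul, hq, has']
  have hap₀ : a • p₀ = p₀ := by rw [hp₀def, ← mul_smul, ha.eq]
  -- the surjection k : Λ → P, l ↦ l • p₀
  let k : Λ →ₗ[Λ] P :=
    { toFun := fun l => l • p₀
      map_add' := fun x y => add_smul x y p₀
      map_smul' := fun m x => mul_smul m x p₀ }
  have hk : ∀ l : Λ, k l = l • p₀ := fun _ => rfl
  have hksurj : Function.Surjective k := by
    have htop : LinearMap.range k ⊔ LinearMap.ker f = ⊤ := by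
      rw [eq_top_iff]
      intro p _
      obtain ⟨l, hl⟩ := gsurj (f p)
      refine Submodule.mem_sup.mpr ⟨k l, ⟨l, rfl⟩, p - k l, ?_, by abel⟩
      rw [LinearMap.mem_ker, map_sub, hk, map_smul, hfp₀, hl, sub_self]
    rw [← LinearMap.range_eq_top]
    exact hsmall _ htop
  obtain ⟨σ, hσ⟩ := Module.projective_lifting_property k LinearMap.id hksurj
  have hσ' : ∀ p : P, k (σ p) = p := fun p => congrFun (congrArg DFunLike.coe hσ) p
  -- retract maps between aΛa and aP
  let ψ : CornerMod a P →ₗ[Corner a] Corner a :=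
    { toFun := fun p => ⟨a * σ p.1 * a, by
        show a * (a * σ p.1 * a) * a = a * σ p.1 * a
        rw [← mul_assoc, ← mul_assoc, ha.eq, mul_assoc (a * σ p.1), ha.eq]⟩
      map_add' := fun x y => by
        apply Subtype.ext
        show a * σ (x.1 + y.1) * a = a * σ x.1 * a + a * σ y.1 * a
        rw [map_add, mul_add, add_mul]
      map_smul' := fun r x => by
        apply Subtype.ext
        show a * σ (r.1 • x.1) * a = r.1 * (a * σ x.1 * a)
        rw [map_smul, smul_eq_mul]
        have h1 : a * (r.1 * σ x.1) = r.1 * σ x.1 := by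
          rw [← mul_assoc, corner_left ha r.2]
        rw [h1, ← mul_assoc r.1 (a * σ x.1) a, ← mul_assoc r.1 a (σ x.1),
          corner_right ha r.2] }
  let φ : Corner a →ₗ[Corner a] CornerMod a P :=
    { toFun := fun x => ⟨x.1 • p₀, by
        show a • (x.1 • p₀) = x.1 • p₀
        rw [← mul_smul, corner_left ha x.2]⟩
      map_add' := fun x y => by
        apply Subtype.ext
        show (x.1 + y.1) • p₀ = x.1 • p₀ + y.1 • p₀
        rw [add_smul]
      map_smul' := fun r x => by
        apply Subtype.ext
        show (r.1 * x.1) • p₀ = r.1 • (x.1 • p₀)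
        rw [mul_smul] }
  have hcomp : φ.comp ψ = LinearMap.id := by
    ext p
    apply Subtype.ext
    show (a * σ p.1 * a) • p₀ = p.1
    have hp : a • p.1 = p.1 := p.2
    calc (a * σ p.1 * a) • p₀ = a • σ p.1 • a • p₀ := by rw [mul_smul, mul_smul]
      _ = a • σ p.1 • p₀ := by rw [hap₀]
      _ = a • k (σ p.1) := rfl
      _ = a • p.1 := by rw [hσ' p.1]
      _ = p.1 := hp
  exact Module.Projective.of_split ψ φ hcomp
end
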